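/- arXiv:2112.03244 — 6 statements merged into one kernel-verified Lean document; each statement's English description precedes it below -/
import Mathlib

section
/- Let u solve the neural field Cauchy problem u' = N(·,u), u(t₀) = u₀, and u_n solve the projected problem u_n' = P_n N(·, u_n), u_n(t₀) = P_n u₀, on J = [t₀, t₀+T]. Then ‖u − u_n‖_{C(J,X)} ≤ e^{β_n} ‖u − P_n u‖_{C(J,X)}, where β_n = T ‖P_n W‖ ‖f'‖_∞. -/
set_option maxHeartbeats 1000000


/-- Upper sandwich bound: `‖u - u_n‖_{C(J,X)} ≤ e^{β_n} ‖u - P_n u‖_{C(J,X)}`,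
where `β_n = T ‖P_n W‖ ‖f'‖_∞`. -/
theorem projection_scheme_upper_bound
    {X : Type*} [NormedAddCommGroup X] [NormedSpace ℝ X] [CompleteSpace X]
    (W : X →L[ℝ] X) (F : X → X) (Lf : NNReal) (hFlip : LipschitzWith Lf F)
    (ξ : ℝ → X) (hξ : Continuous ξ)
    (t₀ T : ℝ) (hT : 0 ≤ T) (u₀ : X)
    (P : X →L[ℝ] X) (hidem : P.comp P = P)
    (u un : ℝ → X)
    (hu0 : u t₀ = u₀) (hun0 : un t₀ = P u₀)
    (hu : ∀ t ∈ Set.Icc t₀ (t₀ + T),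
      HasDerivWithinAt u (-u t + W (F (u t)) + ξ t) (Set.Icc t₀ (t₀ + T)) t)
    (hun : ∀ t ∈ Set.Icc t₀ (t₀ + T),
      HasDerivWithinAt un (P (-un t + W (F (un t)) + ξ t)) (Set.Icc t₀ (t₀ + T)) t)
    (M : ℝ) (hM : ∀ t ∈ Set.Icc t₀ (t₀ + T), ‖u t - P (u t)‖ ≤ M) :
    ∀ t ∈ Set.Icc t₀ (t₀ + T),
      ‖u t - un t‖ ≤ Real.exp (T * ‖P.comp W‖ * Lf) * M := by
  intro t ht
  set a : ℝ := t₀ with ha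
  set b : ℝ := t₀ + T with hb
  have hab : a ≤ b := by rw [ha, hb]; linarith
  have haI : a ∈ Set.Icc a b := ⟨le_rfl, hab⟩
  have hM0 : 0 ≤ M := le_trans (norm_nonneg _) (hM a haI)
  set K : ℝ := ‖P.comp W‖ * (Lf : ℝ) with hKdef
  have hK0 : 0 ≤ K := mul_nonneg (norm_nonneg _) Lf.coe_nonneg
  have hPP : ∀ x : X, P (P x) = P x := fun x => by
    have := ContinuousLinearMap.ext_iff.mp hidem x
    simpa using this
  -- Step 1: `un` stays in the range of `P`.
  have hq : ∀ s ∈ Set.Icc a b,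
      HasDerivWithinAt (fun τ => un τ - P (un τ)) (0 : X) (Set.Icc a b) s := by
    intro s hs
    have h1 := hun s hs
    have h2 : HasDerivWithinAt (fun τ => P (un τ))
        (P (P (-un s + W (F (un s)) + ξ s))) (Set.Icc a b) s :=
      P.hasFDerivAt.comp_hasDerivWithinAt s h1
    have h3 := h1.sub h2
    rw [hPP, sub_self] at h3
    exact h3
  have hPun : ∀ s ∈ Set.Icc a b, P (un s) = un s := by
    intro s hs
    have h0 : un a - P (un a) = 0 := by
      rw [ha, hun0, hPP, sub_self]
    have hle := Convex.norm_image_sub_le_of_norm_hasDerivWithin_le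
      (f := fun τ => un τ - P (un τ)) (f' := fun _ => (0 : X)) (C := 0) hq
      (fun τ _ => by simp) (convex_Icc a b) haI hs
    have hle' : ‖(un s - P (un s)) - (un a - P (un a))‖ ≤ 0 * ‖s - a‖ := hle
    rw [h0, sub_zero, zero_mul] at hle'
    have : un s - P (un s) = 0 := norm_le_zero_iff.mp hle'
    symm
    exact sub_eq_zero.mp this
  -- Step 2: the function `d = P u - un` and its derivative.
  set d : ℝ → X := fun τ => P (u τ) - un τ with hd
  have hd0 : d a = 0 := by simp [hd, hu0, hun0]
  set r : ℝ → X := fun τ => (P.comp W) (F (u τ) - F (un τ)) with hr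
  have hdd : ∀ s ∈ Set.Icc a b,
      HasDerivWithinAt d (-(d s) + r s) (Set.Icc a b) s := by
    intro s hs
    have h1 : HasDerivWithinAt (fun τ => P (u τ))
        (P (-u s + W (F (u s)) + ξ s)) (Set.Icc a b) s :=
      P.hasFDerivAt.comp_hasDerivWithinAt s (hu s hs)
    have h3 := h1.sub (hun s hs)
    have heq : P (-u s + W (F (u s)) + ξ s) - P (-un s + W (F (un s)) + ξ s)
        = -(d s) + r s := by
      simp only [hd, hr, map_add, map_neg, map_sub, ContinuousLinearMap.comp_apply,
        hPun s hs]
      abel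
    rw [heq] at h3
    exact h3
  -- Step 3: the weighted function `g τ = exp (τ - a) • d τ`.
  set g : ℝ → X := fun τ => Real.exp (τ - a) • d τ with hg
  set g' : ℝ → X := fun τ => Real.exp (τ - a) • r τ with hg'
  have hgd : ∀ s ∈ Set.Icc a b, HasDerivWithinAt g (g' s) (Set.Icc a b) s := by
    intro s hs
    have hc : HasDerivWithinAt (fun τ : ℝ => Real.exp (τ - a))
        (Real.exp (s - a)) (Set.Icc a b) s := by
      have := (((hasDerivAt_id s).sub_const a).exp).hasDerivWithinAt
        (s := Set.Icc a b)
      simpa using this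
    have h2 := hc.smul (hdd s hs)
    have heq : Real.exp (s - a) • (-(d s) + r s) + Real.exp (s - a) • d s = g' s := by
      rw [smul_add, smul_neg]
      abel
    rw [heq] at h2
    exact h2
  have hgcont : ContinuousOn g (Set.Icc a b) :=
    fun s hs => (hgd s hs).continuousWithinAt
  -- norm bound on the derivative of `g`
  have hgb : ∀ s ∈ Set.Icc a b,
      ‖g' s‖ ≤ K * ‖g s‖ + K * M * Real.exp (s - a) := by
    intro s hs
    have h1 : ‖r s‖ ≤ K * (M + ‖d s‖) := by
      have hF : ‖F (u s) - F (un s)‖ ≤ (Lf : ℝ) * ‖u s - un s‖ := by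
        have := hFlip.dist_le_mul (u s) (un s)
        simpa [dist_eq_norm] using this
      have h2 : ‖u s - un s‖ ≤ M + ‖d s‖ := by
        have hsplit : u s - un s = (u s - P (u s)) + d s := by
          simp only [hd]; abel
        calc ‖u s - un s‖ = ‖(u s - P (u s)) + d s‖ := by rw [hsplit]
          _ ≤ ‖u s - P (u s)‖ + ‖d s‖ := norm_add_le _ _
          _ ≤ M + ‖d s‖ := by
              have := hM s hs
              linarith
      calc ‖r s‖ ≤ ‖P.comp W‖ * ‖F (u s) - F (un s)‖ :=
            (P.comp W).le_opNorm _
        _ ≤ ‖P.comp W‖ * ((Lf : ℝ) * ‖u s - un s‖) := by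
            apply mul_le_mul_of_nonneg_left hF (norm_nonneg _)
        _ = K * ‖u s - un s‖ := by rw [hKdef]; ring
        _ ≤ K * (M + ‖d s‖) := mul_le_mul_of_nonneg_left h2 hK0
    have hep : (0 : ℝ) < Real.exp (s - a) := Real.exp_pos _
    have hgn : ‖g s‖ = Real.exp (s - a) * ‖d s‖ := by
      rw [hg]
      simp [norm_smul, abs_of_pos hep]
    have : ‖g' s‖ = Real.exp (s - a) * ‖r s‖ := by
      rw [hg']
      simp [norm_smul, abs_of_pos hep]
    rw [this, hgn]
    nlinarith [mul_le_mul_of_nonneg_left h1 hep.le]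
  -- Step 4: Grönwall-type estimate via the fencing theorem, for every ε > 0.
  have key : ∀ ε : ℝ, 0 < ε → ‖g t‖ ≤
      M * Real.exp ((K + 1) * (t - a)) - M * Real.exp (t - a)
        + ε * Real.exp ((K + 2) * (t - a)) := by
    intro ε hε
    have hBd : ∀ τ : ℝ, HasDerivAt
        (fun τ => M * Real.exp ((K + 1) * (τ - a)) - M * Real.exp (τ - a)
          + ε * Real.exp ((K + 2) * (τ - a)))
        (M * ((K + 1) * Real.exp ((K + 1) * (τ - a))) - M * Real.exp (τ - a)
          + ε * ((K + 2) * Real.exp ((K + 2) * (τ - a)))) τ := by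
      intro τ
      have h1 : HasDerivAt (fun y : ℝ => Real.exp ((K + 1) * (y - a)))
          ((K + 1) * Real.exp ((K + 1) * (τ - a))) τ := by
        have := (((hasDerivAt_id τ).sub_const a).const_mul (K + 1)).exp
        simpa [mul_comm] using this
      have h2 : HasDerivAt (fun y : ℝ => Real.exp (y - a))
          (Real.exp (τ - a)) τ := by
        have := ((hasDerivAt_id τ).sub_const a).exp
        simpa using this
      have h3 : HasDerivAt (fun y : ℝ => Real.exp ((K + 2) * (y - a)))
          ((K + 2) * Real.exp ((K + 2) * (τ - a))) τ := by
        have := (((hasDerivAt_id τ).sub_const a).const_mul (K + 2)).exp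
        simpa [mul_comm] using this
      exact ((h1.const_mul M).sub (h2.const_mul M)).add (h3.const_mul ε)
    have hginit : ‖g a‖ ≤ M * Real.exp ((K + 1) * (a - a)) - M * Real.exp (a - a)
        + ε * Real.exp ((K + 2) * (a - a)) := by
      have hga : g a = 0 := by rw [hg]; simp [hd0]
      rw [hga, norm_zero]
      simp only [sub_self, mul_zero, Real.exp_zero, mul_one]
      linarith
    have hIci : ∀ x ∈ Set.Ico a b, HasDerivWithinAt g (g' x) (Set.Ici x) x := by
      intro x hx
      exact (hgd x (Set.Ico_subset_Icc_self hx)).mono_of_mem_nhdsWithin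
        (Icc_mem_nhdsGE_of_mem hx)
    have hbound : ∀ x ∈ Set.Ico a b,
        ‖g x‖ = M * Real.exp ((K + 1) * (x - a)) - M * Real.exp (x - a)
          + ε * Real.exp ((K + 2) * (x - a)) →
        ‖g' x‖ < M * ((K + 1) * Real.exp ((K + 1) * (x - a))) - M * Real.exp (x - a)
          + ε * ((K + 2) * Real.exp ((K + 2) * (x - a))) := by
      intro x hx hfB
      have hxa : 0 ≤ x - a := by linarith [hx.1]
      have hE01 : Real.exp (x - a) ≤ Real.exp ((K + 1) * (x - a)) :=
        Real.exp_le_exp.mpr (by nlinarith)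
      have hE2 : (0 : ℝ) < Real.exp ((K + 2) * (x - a)) := Real.exp_pos _
      have p1 : 0 ≤ M * (Real.exp ((K + 1) * (x - a)) - Real.exp (x - a)) :=
        mul_nonneg hM0 (by linarith)
      have p2 : 0 < ε * Real.exp ((K + 2) * (x - a)) := mul_pos hε hE2
      have h1 := hgb x (Set.Ico_subset_Icc_self hx)
      rw [hfB] at h1
      nlinarith [h1, p1, p2]
    exact image_norm_le_of_norm_deriv_right_lt_deriv_boundary hgcont hIci hginit hBd hbound ht
  -- Step 5: pass to the limit ε → 0 and conclude.
  have hkey : ‖g t‖ ≤ M * Real.exp ((K + 1) * (t - a)) - M * Real.exp (t - a) := by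
    apply le_of_forall_pos_le_add
    intro ε' hε'
    have hE2 : (0 : ℝ) < Real.exp ((K + 2) * (t - a)) := Real.exp_pos _
    have := key (ε' / Real.exp ((K + 2) * (t - a))) (by positivity)
    rw [div_mul_cancel₀ _ hE2.ne'] at this
    linarith
  have hta : 0 ≤ t - a := by linarith [ht.1]
  have htb : t - a ≤ T := by
    have := ht.2
    rw [hb] at this
    linarith
  have hep : (0 : ℝ) < Real.exp (t - a) := Real.exp_pos _
  have hgn : ‖g t‖ = Real.exp (t - a) * ‖d t‖ := by
    rw [hg]; simp [norm_smul, abs_of_pos hep]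
  -- exp arithmetic
  have hsum : Real.exp ((K + 1) * (t - a)) = Real.exp (K * (t - a)) * Real.exp (t - a) := by
    rw [← Real.exp_add]; ring_nf
  have hKle : Real.exp (K * (t - a)) ≤ Real.exp (T * ‖P.comp W‖ * (Lf : ℝ)) := by
    apply Real.exp_le_exp.mpr
    have : T * ‖P.comp W‖ * (Lf : ℝ) = K * T := by rw [hKdef]; ring
    rw [this]
    nlinarith
  have hdle : ‖d t‖ ≤ M * Real.exp (K * (t - a)) - M := by
    rw [hgn, hsum] at hkey
    nlinarith
  have hsplit : ‖u t - un t‖ ≤ M + ‖d t‖ := by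
    have h : u t - un t = (u t - P (u t)) + d t := by simp only [hd]; abel
    calc ‖u t - un t‖ = ‖(u t - P (u t)) + d t‖ := by rw [h]
      _ ≤ ‖u t - P (u t)‖ + ‖d t‖ := norm_add_le _ _
      _ ≤ M + ‖d t‖ := by linarith [hM t ht]
  have hfin : M * Real.exp (K * (t - a)) ≤ Real.exp (T * ‖P.comp W‖ * (Lf : ℝ)) * M := by
    nlinarith
  linarith
end

section
/- Under the same hypotheses, the reverse bound holds: ‖u − P_n u‖_{C(J,X)} ≤ (1 + β_n) ‖u − u_n‖_{C(J,X)}, where β_n = T ‖P_n W‖ ‖f'‖_∞. -/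
/-- Lower sandwich bound: `‖u - P_n u‖_{C(J,X)} ≤ (1 + β_n) ‖u - u_n‖_{C(J,X)}`,
where `β_n = T ‖P_n W‖ ‖f'‖_∞`. -/
theorem projection_scheme_lower_bound
    {X : Type*} [NormedAddCommGroup X] [NormedSpace ℝ X] [CompleteSpace X]
    (W : X →L[ℝ] X) (F : X → X) (Lf : NNReal) (hFlip : LipschitzWith Lf F)
    (ξ : ℝ → X) (hξ : Continuous ξ)
    (t₀ T : ℝ) (hT : 0 ≤ T) (u₀ : X)
    (P : X →L[ℝ] X) (hidem : P.comp P = P)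
    (u un : ℝ → X)
    (hu0 : u t₀ = u₀) (hun0 : un t₀ = P u₀)
    (hu : ∀ t ∈ Set.Icc t₀ (t₀ + T),
      HasDerivWithinAt u (-u t + W (F (u t)) + ξ t) (Set.Icc t₀ (t₀ + T)) t)
    (hun : ∀ t ∈ Set.Icc t₀ (t₀ + T),
      HasDerivWithinAt un (P (-un t + W (F (un t)) + ξ t)) (Set.Icc t₀ (t₀ + T)) t)
    (M : ℝ) (hM : ∀ t ∈ Set.Icc t₀ (t₀ + T), ‖u t - un t‖ ≤ M) :
    ∀ t ∈ Set.Icc t₀ (t₀ + T),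
      ‖u t - P (u t)‖ ≤ (1 + T * ‖P.comp W‖ * Lf) * M := by
  intro t ht
  obtain ⟨ht₀, htT⟩ := ht
  have ht₀J : t₀ ∈ Set.Icc t₀ (t₀ + T) := Set.left_mem_Icc.2 (by linarith)
  have hM0 : 0 ≤ M := le_trans (norm_nonneg _) (hM t ⟨ht₀, htT⟩)
  set C : ℝ := ‖P.comp W‖ * Lf with hC
  have hC0 : 0 ≤ C := mul_nonneg (norm_nonneg _) Lf.coe_nonneg
  -- Step 1 : P ∘ un = un on J
  have hPun : ∀ s ∈ Set.Icc t₀ (t₀ + T), P (un s) = un s := by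
    intro s hs
    have key : ∀ x ∈ Set.Icc t₀ (t₀ + T),
        HasDerivWithinAt (fun r => P (un r) - un r)
          ((0 : ℝ → X) x) (Set.Icc t₀ (t₀ + T)) x := by
      intro x hx
      have h1 := hun x hx
      have h2 : HasDerivWithinAt (fun r => P (un r))
          (P (P (-un x + W (F (un x)) + ξ x))) (Set.Icc t₀ (t₀ + T)) x :=
        P.hasFDerivAt.comp_hasDerivWithinAt x h1
      have hPP : P (P (-un x + W (F (un x)) + ξ x)) = P (-un x + W (F (un x)) + ξ x) := by
        rw [← ContinuousLinearMap.comp_apply, hidem]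
      have h3 : HasDerivWithinAt (fun r => P (un r) - un r) _ _ x := h2.sub h1
      rw [hPP, sub_self] at h3
      simpa only [Pi.zero_apply] using h3
    have h0 := Convex.norm_image_sub_le_of_norm_hasDerivWithin_le (C := 0) key
      (fun x _ => by simp) (convex_Icc t₀ (t₀ + T)) ht₀J hs
    have : ‖(P (un s) - un s) - (P (un t₀) - un t₀)‖ ≤ 0 := by simpa using h0
    have hinit : P (un t₀) - un t₀ = 0 := by
      have := congrArg (fun Q : X →L[ℝ] X => Q u₀) hidem
      simp only [hun0]
      simpa [sub_eq_zero] using this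
    have := norm_le_zero_iff.1 (by simpa [hinit] using this)
    exact sub_eq_zero.1 this
  -- v and its derivative
  set v : ℝ → X := fun s => P (u s) - un s with hvdef
  have hv' : ∀ s ∈ Set.Icc t₀ (t₀ + T),
      HasDerivWithinAt v (-v s + (P.comp W) (F (u s) - F (un s))) (Set.Icc t₀ (t₀ + T)) s := by
    intro s hs
    have h1 : HasDerivWithinAt (fun r => P (u r))
        (P (-u s + W (F (u s)) + ξ s)) (Set.Icc t₀ (t₀ + T)) s :=
      P.hasFDerivAt.comp_hasDerivWithinAt s (hu s hs)
    have h2 : HasDerivWithinAt (fun r => P (u r) - un r) _ _ s := h1.sub (hun s hs)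
    convert h2 using 1
    simp only [map_add, map_neg, map_sub, hvdef, ContinuousLinearMap.comp_apply]
    rw [hPun s hs]
    abel
  -- g = exp • v and its derivative
  set G : ℝ → X := fun s => Real.exp s • (P.comp W) (F (u s) - F (un s)) with hGdef
  set g : ℝ → X := fun s => Real.exp s • v s with hgdef
  have hg' : ∀ s ∈ Set.Icc t₀ (t₀ + T),
      HasDerivWithinAt g (G s) (Set.Icc t₀ (t₀ + T)) s := by
    intro s hs
    have h1 : HasDerivWithinAt Real.exp (Real.exp s) (Set.Icc t₀ (t₀ + T)) s :=
      (Real.hasDerivAt_exp s).hasDerivWithinAt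
    have h2 : HasDerivWithinAt (fun y => Real.exp y • v y) _ _ s := h1.smul (hv' s hs)
    convert h2 using 1
    simp only [hGdef, smul_add, smul_neg]
    abel
  -- continuity facts
  have hu_cont : ContinuousOn u (Set.Icc t₀ (t₀ + T)) :=
    fun s hs => (hu s hs).continuousWithinAt
  have hun_cont : ContinuousOn un (Set.Icc t₀ (t₀ + T)) :=
    fun s hs => (hun s hs).continuousWithinAt
  have hG_cont : ContinuousOn G (Set.Icc t₀ (t₀ + T)) := by
    apply (Real.continuous_exp.continuousOn).smul
    exact (P.comp W).continuous.comp_continuousOn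
      ((hFlip.continuous.comp_continuousOn hu_cont).sub
        (hFlip.continuous.comp_continuousOn hun_cont))
  have hg_cont : ContinuousOn g (Set.Icc t₀ (t₀ + T)) :=
    fun s hs => (hg' s hs).continuousWithinAt
  have hIccSub : Set.Icc t₀ t ⊆ Set.Icc t₀ (t₀ + T) :=
    Set.Icc_subset_Icc le_rfl htT
  -- FTC
  have hftc : ∫ s in t₀..t, G s = g t - g t₀ := by
    apply intervalIntegral.integral_eq_sub_of_hasDeriv_right_of_le ht₀
      (hg_cont.mono hIccSub)
    · intro x hx
      have hxJ : x ∈ Set.Icc t₀ (t₀ + T) := hIccSub (Set.Ioo_subset_Icc_self hx)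
      exact (hg' x hxJ).mono_of_mem_nhdsWithin
        (Icc_mem_nhdsGT_of_mem ⟨hx.1.le, lt_of_lt_of_le hx.2 htT⟩)
    · exact (hG_cont.mono hIccSub).intervalIntegrable_of_Icc ht₀
  have hg0 : g t₀ = 0 := by
    simp [hgdef, hvdef, hu0, hun0]
  -- norm bound on the integral
  have hbound : ‖∫ s in t₀..t, G s‖ ≤ |∫ s in t₀..t, C * M * Real.exp s| := by
    apply intervalIntegral.norm_integral_le_abs_of_norm_le
    · filter_upwards [MeasureTheory.ae_restrict_mem measurableSet_uIoc] with s hs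
      rw [Set.uIoc_of_le ht₀] at hs
      have hsJ : s ∈ Set.Icc t₀ (t₀ + T) :=
        ⟨hs.1.le, hs.2.trans htT⟩
      have h1 : ‖(P.comp W) (F (u s) - F (un s))‖ ≤ C * M := by
        calc ‖(P.comp W) (F (u s) - F (un s))‖
            ≤ ‖P.comp W‖ * ‖F (u s) - F (un s)‖ := (P.comp W).le_opNorm _
          _ ≤ ‖P.comp W‖ * (Lf * ‖u s - un s‖) := by
              have := hFlip.dist_le_mul (u s) (un s)
              rw [dist_eq_norm, dist_eq_norm] at this
              exact mul_le_mul_of_nonneg_left this (norm_nonneg _)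
          _ ≤ ‖P.comp W‖ * (Lf * M) := by
              have := hM s hsJ
              gcongr
          _ = C * M := by rw [hC]; ring
      calc ‖G s‖ = Real.exp s * ‖(P.comp W) (F (u s) - F (un s))‖ := by
            rw [hGdef]; simp [norm_smul, Real.abs_exp]
        _ ≤ Real.exp s * (C * M) :=
            mul_le_mul_of_nonneg_left h1 (Real.exp_pos s).le
        _ = C * M * Real.exp s := by ring
    · apply ContinuousOn.intervalIntegrable_of_Icc ht₀
      exact (continuousOn_const.mul Real.continuous_exp.continuousOn)
  have hint : ∫ s in t₀..t, C * M * Real.exp s = C * M * (Real.exp t - Real.exp t₀) := by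
    rw [intervalIntegral.integral_const_mul, integral_exp]
  have hgt : ‖g t‖ ≤ C * M * (Real.exp t - Real.exp t₀) := by
    have h1 : ‖g t‖ = ‖∫ s in t₀..t, G s‖ := by rw [hftc, hg0, sub_zero]
    rw [h1]
    refine hbound.trans ?_
    rw [hint, abs_of_nonneg]
    have h5 : Real.exp t₀ ≤ Real.exp t := Real.exp_le_exp.2 ht₀
    exact mul_nonneg (mul_nonneg hC0 hM0) (by linarith)
  -- conclude the bound on v
  have hvt : ‖v t‖ ≤ C * M * T := by
    have hgv : ‖g t‖ = Real.exp t * ‖v t‖ := by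
      rw [hgdef]; simp [norm_smul, Real.abs_exp]
    have hexp : Real.exp t - Real.exp t₀ ≤ Real.exp t * T := by
      have h1 : Real.exp t₀ = Real.exp t * Real.exp (t₀ - t) := by
        rw [← Real.exp_add]; ring_nf
      have h2 : (t₀ - t) + 1 ≤ Real.exp (t₀ - t) := Real.add_one_le_exp _
      have h3 : (0 : ℝ) < Real.exp t := Real.exp_pos t
      nlinarith [Real.exp_pos (t₀ - t)]
    have h4 : Real.exp t * ‖v t‖ ≤ Real.exp t * (C * M * T) := by
      rw [← hgv]
      refine hgt.trans ?_
      calc C * M * (Real.exp t - Real.exp t₀) ≤ C * M * (Real.exp t * T) := by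
            have := mul_nonneg hC0 hM0; nlinarith
        _ = Real.exp t * (C * M * T) := by ring
    exact le_of_mul_le_mul_left h4 (Real.exp_pos t)
  -- final estimate
  have : ‖u t - P (u t)‖ ≤ ‖u t - un t‖ + ‖v t‖ := by
    have : u t - P (u t) = (u t - un t) - v t := by
      rw [hvdef]; beta_reduce; abel
    rw [this]
    exact norm_sub_le _ _
  calc ‖u t - P (u t)‖ ≤ ‖u t - un t‖ + ‖v t‖ := this
    _ ≤ M + C * M * T := add_le_add (hM t ⟨ht₀, htT⟩) hvt
    _ = (1 + T * ‖P.comp W‖ * Lf) * M := by rw [hC]; ring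
end

section
/- Under the same hypotheses, ‖u − P_n u‖_{C(J,X)} ≤ α_n, where α_n = ‖u₀ − P_n u₀‖ + T ‖f‖_∞ ‖W − P_n W‖ + T ‖ξ − P_n ξ‖_{C(J,X)}. -/
/-- Bound `‖u - P_n u‖_{C(J,X)} ≤ α_n`, where
`α_n = ‖u₀ - P_n u₀‖ + T ‖f‖_∞ ‖W - P_n W‖ + T ‖ξ - P_n ξ‖_{C(J,X)}`. -/
theorem projection_of_solution_bound
    {X : Type*} [NormedAddCommGroup X] [NormedSpace ℝ X] [CompleteSpace X]
    (W : X →L[ℝ] X) (F : X → X) (Lf : NNReal) (hFlip : LipschitzWith Lf F)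
    (Mf : ℝ) (hFb : ∀ v : X, ‖F v‖ ≤ Mf)
    (ξ : ℝ → X) (hξ : Continuous ξ)
    (t₀ T : ℝ) (hT : 0 ≤ T) (u₀ : X)
    (P : X →L[ℝ] X) (hidem : P.comp P = P)
    (u : ℝ → X) (hu0 : u t₀ = u₀)
    (hu : ∀ t ∈ Set.Icc t₀ (t₀ + T),
      HasDerivWithinAt u (-u t + W (F (u t)) + ξ t) (Set.Icc t₀ (t₀ + T)) t)
    (Mξ : ℝ) (hMξ : ∀ t ∈ Set.Icc t₀ (t₀ + T), ‖ξ t - P (ξ t)‖ ≤ Mξ) :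
    ∀ t ∈ Set.Icc t₀ (t₀ + T),
      ‖u t - P (u t)‖ ≤ ‖u₀ - P u₀‖ + T * Mf * ‖W - P.comp W‖ + T * Mξ := by
  intro t ht
  have hab : t₀ ≤ t₀ + T := by linarith
  have hMf : 0 ≤ Mf := le_trans (norm_nonneg _) (hFb 0)
  have hMξ0 : 0 ≤ Mξ := le_trans (norm_nonneg _) (hMξ t₀ ⟨le_refl _, hab⟩)
  set C : ℝ := Mf * ‖W - P.comp W‖ + Mξ with hC
  have hC0 : 0 ≤ C := add_nonneg (mul_nonneg hMf (norm_nonneg _)) hMξ0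
  -- the weighted function
  set w : ℝ → X := fun s => Real.exp s • (u s - P (u s)) with hw
  set g : ℝ → X := fun s =>
    Real.exp s • ((W (F (u s)) - P (W (F (u s)))) + (ξ s - P (ξ s))) with hg
  set B : ℝ → ℝ := fun s =>
    ‖u₀ - P u₀‖ * Real.exp t₀ + C * (Real.exp s - Real.exp t₀) with hB
  -- continuity of w on the interval
  have hucont : ContinuousOn u (Set.Icc t₀ (t₀ + T)) :=
    fun s hs => (hu s hs).continuousWithinAt
  have hwcont : ContinuousOn w (Set.Icc t₀ (t₀ + T)) := by
    apply (Real.continuous_exp.continuousOn).smul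
    exact hucont.sub (P.continuous.comp_continuousOn hucont)
  -- derivative of w
  have hw' : ∀ x ∈ Set.Ico t₀ (t₀ + T), HasDerivWithinAt w (g x) (Set.Ici x) x := by
    intro x hx
    have hxI : x ∈ Set.Icc t₀ (t₀ + T) := ⟨hx.1, le_of_lt hx.2⟩
    have hu' : HasDerivWithinAt u (-u x + W (F (u x)) + ξ x) (Set.Ici x) x := by
      apply (hu x hxI).mono_of_mem_nhdsWithin
      exact Filter.mem_of_superset (Icc_mem_nhdsGE_of_mem ⟨le_refl x, hx.2⟩)
        (Set.Icc_subset_Icc hx.1 (le_refl _))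
    have hPu' : HasDerivWithinAt (fun s => P (u s)) (P (-u x + W (F (u x)) + ξ x))
        (Set.Ici x) x := P.hasFDerivAt.comp_hasDerivWithinAt x hu'
    have hv' : HasDerivWithinAt (fun s => u s - P (u s))
        ((-u x + W (F (u x)) + ξ x) - P (-u x + W (F (u x)) + ξ x)) (Set.Ici x) x :=
      hu'.sub hPu'
    have := ((Real.hasDerivAt_exp x).hasDerivWithinAt).smul hv'
    convert this using 1
    · rfl
    simp only [hg]
    rw [← smul_add]
    congr 1
    simp only [map_add, map_neg]
    abel
  -- initial bound
  have hB0 : ‖w t₀‖ ≤ B t₀ := by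
    simp [hw, hB, hu0, norm_smul, Real.abs_exp, mul_comm]
  -- derivative of B
  have hBd : ∀ x, HasDerivAt B (C * Real.exp x) x := by
    intro x
    exact (((Real.hasDerivAt_exp x).sub_const _).const_mul C).const_add _
  -- bound on the derivative
  have hbound : ∀ x ∈ Set.Ico t₀ (t₀ + T), ‖g x‖ ≤ C * Real.exp x := by
    intro x hx
    have hxI : x ∈ Set.Icc t₀ (t₀ + T) := ⟨hx.1, le_of_lt hx.2⟩
    have h1 : ‖W (F (u x)) - P (W (F (u x)))‖ ≤ Mf * ‖W - P.comp W‖ := by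
      have : W (F (u x)) - P (W (F (u x))) = (W - P.comp W) (F (u x)) := by
        simp [ContinuousLinearMap.sub_apply]
      rw [this]
      calc ‖(W - P.comp W) (F (u x))‖ ≤ ‖W - P.comp W‖ * ‖F (u x)‖ :=
            (W - P.comp W).le_opNorm _
        _ ≤ ‖W - P.comp W‖ * Mf :=
            mul_le_mul_of_nonneg_left (hFb _) (norm_nonneg _)
        _ = Mf * ‖W - P.comp W‖ := mul_comm _ _
    have h2 : ‖ξ x - P (ξ x)‖ ≤ Mξ := hMξ x hxI
    have : ‖g x‖ = Real.exp x * ‖(W (F (u x)) - P (W (F (u x)))) + (ξ x - P (ξ x))‖ := by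
      simp only [hg]
      rw [norm_smul, Real.norm_eq_abs, Real.abs_exp]
    rw [this]
    have hn : ‖(W (F (u x)) - P (W (F (u x)))) + (ξ x - P (ξ x))‖ ≤ C :=
      le_trans (norm_add_le _ _) (by rw [hC]; exact add_le_add h1 h2)
    calc Real.exp x * ‖(W (F (u x)) - P (W (F (u x)))) + (ξ x - P (ξ x))‖
        ≤ Real.exp x * C := mul_le_mul_of_nonneg_left hn (Real.exp_pos x).le
      _ = C * Real.exp x := mul_comm _ _
  have key : ‖w t‖ ≤ B t :=
    image_norm_le_of_norm_deriv_right_le_deriv_boundary hwcont hw' hB0 hBd hbound ht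
  -- unfold and conclude
  have hwt : ‖w t‖ = Real.exp t * ‖u t - P (u t)‖ := by
    simp [hw, norm_smul, Real.abs_exp]
  rw [hwt, hB] at key
  have key' : Real.exp t * ‖u t - P (u t)‖ ≤
      ‖u₀ - P u₀‖ * Real.exp t₀ + C * (Real.exp t - Real.exp t₀) := key
  have hexp : Real.exp t₀ ≤ Real.exp t := Real.exp_le_exp.mpr ht.1
  have hconv : Real.exp t - Real.exp t₀ ≤ Real.exp t * (t - t₀) := by
    have h := Real.add_one_le_exp (t₀ - t)
    have := mul_le_mul_of_nonneg_left h (Real.exp_pos t).le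
    rw [← Real.exp_add] at this
    have ht' : t + (t₀ - t) = t₀ := by ring
    rw [ht'] at this
    nlinarith
  have htT : t - t₀ ≤ T := by linarith [ht.2]
  have hept : 0 < Real.exp t := Real.exp_pos t
  have hgoal : Real.exp t * ‖u t - P (u t)‖ ≤
      Real.exp t * (‖u₀ - P u₀‖ + C * T) := by
    have h1 : C * (Real.exp t - Real.exp t₀) ≤ C * (Real.exp t * T) := by
      apply mul_le_mul_of_nonneg_left _ hC0
      calc Real.exp t - Real.exp t₀ ≤ Real.exp t * (t - t₀) := hconv
        _ ≤ Real.exp t * T := mul_le_mul_of_nonneg_left htT hept.le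
    have h2 : ‖u₀ - P u₀‖ * Real.exp t₀ ≤ ‖u₀ - P u₀‖ * Real.exp t :=
      mul_le_mul_of_nonneg_left hexp (norm_nonneg _)
    nlinarith [key']
  have hfin := le_of_mul_le_mul_left hgoal hept
  calc ‖u t - P (u t)‖ ≤ ‖u₀ - P u₀‖ + C * T := hfin
    _ = ‖u₀ - P u₀‖ + T * Mf * ‖W - P.comp W‖ + T * Mξ := by rw [hC]; ring
end

section
/- Assume there exist p > 0 and n₀ such that ‖P_n W‖ ≤ p for all n > n₀, and suppose P_n v → v in X for all v ∈ X. Then for every solution u of the neural field Cauchy problem, the projected solutions u_n converge to u in C(J, X), and moreover ‖u − u_n‖_{C(J,X)} and ‖u − P_n u‖_{C(J,X)} converge to 0 at exactly the same speed, in the sense that (1+β)^{-1} ‖u − P_n u‖_{C(J,X)} ≤ ‖u − u_n‖_{C(J,X)} ≤ e^β ‖u − P_n u‖_{C(J,X)} for all n > n₀ with β = pT‖f'‖_∞. -/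
open Filter Set

lemma liminf_right_slope_dissipative {X : Type*} [NormedAddCommGroup X] [NormedSpace ℝ X]
    {f : ℝ → X} {x : ℝ} {r : X}
    (hf : HasDerivWithinAt f (-f x + r) (Ici x) x) {c : ℝ} (hc : -‖f x‖ + ‖r‖ < c) :
    ∃ᶠ z in nhdsWithin x (Ioi x), (z - x)⁻¹ * (‖f z‖ - ‖f x‖) < c := by
  have h1 : Tendsto (slope f x) (nhdsWithin x (Ioi x)) (nhds (-f x + r)) := by
    have := hf.Ioi_of_Ici
    rw [hasDerivWithinAt_iff_tendsto_slope] at this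
    simpa [Set.diff_singleton_eq_self, notMem_Ioi.mpr (le_refl x)] using this
  set η : ℝ := c - (-‖f x‖ + ‖r‖) with hη
  have hηpos : 0 < η := by linarith
  have h2 : ∀ᶠ z in nhdsWithin x (Ioi x), ‖slope f x z - (-f x + r)‖ < η := by
    have := Metric.tendsto_nhds.mp h1 η hηpos
    filter_upwards [this] with z hz
    rwa [dist_eq_norm] at hz
  have h3 : Ioo x (x + 1) ∈ nhdsWithin x (Ioi x) :=
    Ioo_mem_nhdsGT_of_mem ⟨le_refl x, by linarith⟩
  refine ((h2.and (eventually_of_mem h3 (fun z hz => hz))).mono ?_).frequently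
  rintro z ⟨hz, hz1, hz2⟩
  have hpos : 0 < z - x := by linarith
  have hlt1 : z - x < 1 := by linarith
  have hfz : f z = f x + (z - x) • slope f x z := by
    rw [slope_def_module, smul_smul, mul_inv_cancel₀ (ne_of_gt hpos), one_smul]; abel
  have hdecomp : f z = (1 - (z - x)) • f x + (z - x) • r
      + (z - x) • (slope f x z - (-f x + r)) := by
    rw [hfz]; module
  have hnorm : ‖f z‖ ≤ (1 - (z - x)) * ‖f x‖ + (z - x) * ‖r‖
      + (z - x) * ‖slope f x z - (-f x + r)‖ := by
    have e1 : ‖(1 - (z - x)) • f x‖ = (1 - (z - x)) * ‖f x‖ := by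
      rw [norm_smul, Real.norm_eq_abs, abs_of_nonneg (by linarith)]
    have e2 : ‖(z - x) • r‖ = (z - x) * ‖r‖ := by
      rw [norm_smul, Real.norm_eq_abs, abs_of_pos hpos]
    have e3 : ‖(z - x) • (slope f x z - (-f x + r))‖
        = (z - x) * ‖slope f x z - (-f x + r)‖ := by
      rw [norm_smul, Real.norm_eq_abs, abs_of_pos hpos]
    calc ‖f z‖ = ‖(1 - (z - x)) • f x + (z - x) • r
        + (z - x) • (slope f x z - (-f x + r))‖ := by rw [← hdecomp]
      _ ≤ ‖(1 - (z - x)) • f x‖ + ‖(z - x) • r‖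
          + ‖(z - x) • (slope f x z - (-f x + r))‖ := norm_add₃_le
      _ = _ := by rw [e1, e2, e3]
  have : ‖f z‖ - ‖f x‖ < (z - x) * c := by
    have h4 : (z - x) * ‖slope f x z - (-f x + r)‖ < (z - x) * η :=
      (mul_lt_mul_iff_right₀ hpos).mpr hz
    nlinarith [norm_nonneg (f x)]
  calc (z - x)⁻¹ * (‖f z‖ - ‖f x‖) < (z - x)⁻¹ * ((z - x) * c) :=
        (mul_lt_mul_iff_right₀ (inv_pos.mpr hpos)).mpr this
    _ = c := by field_simp

/-- If `‖P_n W‖ ≤ p` eventually and `P_n v → v` for all `v`, the projected solutions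
converge to the solution in `C(J,X)`, and `‖u - u_n‖_{C(J,X)}` and
`‖u - P_n u‖_{C(J,X)}` converge to `0` at exactly the same speed:
`(1+β)⁻¹ ‖u - P_n u‖ ≤ ‖u - u_n‖ ≤ e^β ‖u - P_n u‖` with `β = pT‖f'‖_∞`. -/
theorem projection_scheme_convergence
    {X : Type*} [NormedAddCommGroup X] [NormedSpace ℝ X] [CompleteSpace X]
    (W : X →L[ℝ] X) (hWc : IsCompactOperator W)
    (F : X → X) (Lf : NNReal) (hFlip : LipschitzWith Lf F)
    (ξ : ℝ → X) (hξ : Continuous ξ)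
    (t₀ T : ℝ) (hT : 0 ≤ T) (u₀ : X)
    (P : ℕ → X →L[ℝ] X) (hidem : ∀ n, (P n).comp (P n) = P n)
    (p : ℝ) (n₀ : ℕ) (hp : ∀ n > n₀, ‖(P n).comp W‖ ≤ p)
    (hconv : ∀ v : X, Tendsto (fun n => P n v) atTop (nhds v))
    (u : ℝ → X) (un : ℕ → ℝ → X)
    (hu0 : u t₀ = u₀) (hun0 : ∀ n, un n t₀ = P n u₀)
    (hu : ∀ t ∈ Set.Icc t₀ (t₀ + T),
      HasDerivWithinAt u (-u t + W (F (u t)) + ξ t) (Set.Icc t₀ (t₀ + T)) t)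
    (hun : ∀ n, ∀ t ∈ Set.Icc t₀ (t₀ + T),
      HasDerivWithinAt (un n) (P n (-un n t + W (F (un n t)) + ξ t))
        (Set.Icc t₀ (t₀ + T)) t) :
    Tendsto (fun n => ⨆ t : Set.Icc t₀ (t₀ + T), ‖u t - un n t‖) atTop (nhds 0) ∧
    ∀ n > n₀,
      (1 + p * T * Lf)⁻¹ * (⨆ t : Set.Icc t₀ (t₀ + T), ‖u t - P n (u t)‖) ≤
        (⨆ t : Set.Icc t₀ (t₀ + T), ‖u t - un n t‖) ∧
      (⨆ t : Set.Icc t₀ (t₀ + T), ‖u t - un n t‖) ≤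
        Real.exp (p * T * Lf) * (⨆ t : Set.Icc t₀ (t₀ + T), ‖u t - P n (u t)‖) := by
  have htJ : t₀ ∈ Set.Icc t₀ (t₀ + T) := ⟨le_refl _, by linarith⟩
  have hJne : (Set.Icc t₀ (t₀ + T)).Nonempty := ⟨t₀, htJ⟩
  haveI : Nonempty (Set.Icc t₀ (t₀ + T)) := hJne.to_subtype
  have hcompact : IsCompact (Set.Icc t₀ (t₀ + T)) := isCompact_Icc
  -- continuity
  have hucont : ContinuousOn u (Set.Icc t₀ (t₀ + T)) :=
    fun t ht => (hu t ht).continuousWithinAt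
  have huncont : ∀ n, ContinuousOn (un n) (Set.Icc t₀ (t₀ + T)) :=
    fun n t ht => (hun n t ht).continuousWithinAt
  -- right derivatives from derivatives within J
  have hright : ∀ {f : ℝ → X} {v : X} {t : ℝ}, t ∈ Set.Ico t₀ (t₀ + T) →
      HasDerivWithinAt f v (Set.Icc t₀ (t₀ + T)) t → HasDerivWithinAt f v (Set.Ici t) t := by
    intro f v t ht hf
    exact hf.mono_of_mem_nhdsWithin (Icc_mem_nhdsGE_of_mem ht)
  -- `P n` fixes `un n t`
  have hfix : ∀ n, ∀ t ∈ Set.Icc t₀ (t₀ + T), P n (un n t) = un n t := by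
    intro n t ht
    have key : ∀ s ∈ Set.Icc t₀ (t₀ + T),
        ‖P n (un n s) - un n s‖ ≤ gronwallBound 0 0 0 (s - t₀) := by
      refine norm_le_gronwallBound_of_norm_deriv_right_le (f' := fun _ => (0 : X))
        ?_ ?_ ?_ ?_
      · exact ((P n).continuous.comp_continuousOn (huncont n)).sub (huncont n)
      · intro s hs
        have h1 : HasDerivWithinAt (un n)
            (P n (-un n s + W (F (un n s)) + ξ s)) (Set.Ici s) s :=
          hright hs (hun n s (Set.mem_Icc_of_Ico hs))
        have h2 : HasDerivWithinAt (fun z => P n (un n z))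
            (P n (P n (-un n s + W (F (un n s)) + ξ s))) (Set.Ici s) s :=
          (P n).hasFDerivAt.comp_hasDerivWithinAt s h1
        have h3 : P n (P n (-un n s + W (F (un n s)) + ξ s))
            - P n (-un n s + W (F (un n s)) + ξ s) = 0 := by
          rw [← ContinuousLinearMap.comp_apply, hidem n, sub_self]
        have h4 := h2.sub h1
        rw [h3] at h4
        exact h4
      · have hfix0 : P n (un n t₀) = un n t₀ := by
          rw [hun0 n, ← ContinuousLinearMap.comp_apply, hidem n]
        simp [hfix0]
      · intro s hs; simp
    have h5 := key t ht
    rw [gronwallBound_K0] at h5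
    simp only [zero_mul, add_zero, zero_add] at h5
    have h6 := le_antisymm h5 (norm_nonneg _)
    rwa [norm_eq_zero, sub_eq_zero] at h6
  -- basics
  have hp0 : 0 ≤ p := le_trans (norm_nonneg _) (hp (n₀ + 1) (lt_add_one n₀))
  have hLf0 : (0 : ℝ) ≤ (Lf : ℝ) := Lf.coe_nonneg
  set K : ℝ := p * (Lf : ℝ) with hKdef
  have hK0 : 0 ≤ K := mul_nonneg hp0 hLf0
  have hF : ∀ a b : X, ‖F a - F b‖ ≤ (Lf : ℝ) * ‖a - b‖ := by
    intro a b
    have := hFlip.dist_le_mul a b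
    rwa [dist_eq_norm, dist_eq_norm] at this
  -- sup definitions
  set D : ℕ → ℝ := fun n => ⨆ t : Set.Icc t₀ (t₀ + T), ‖u t - P n (u t)‖ with hDdef
  set E : ℕ → ℝ := fun n => ⨆ t : Set.Icc t₀ (t₀ + T), ‖u t - un n t‖ with hEdef
  have bdd : ∀ (g : ℝ → X), ContinuousOn g (Set.Icc t₀ (t₀ + T)) →
      BddAbove (Set.range fun t : Set.Icc t₀ (t₀ + T) => ‖g t‖) := by
    intro g hg
    have him := Set.image_eq_range (fun x => ‖g x‖) (Set.Icc t₀ (t₀ + T))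
    rw [← him]
    exact hcompact.bddAbove_image (continuous_norm.comp_continuousOn hg)
  have hbddD : ∀ n, BddAbove (Set.range fun t : Set.Icc t₀ (t₀ + T) =>
      ‖u t - P n (u t)‖) := fun n =>
    bdd _ (hucont.sub ((P n).continuous.comp_continuousOn hucont))
  have hbddE : ∀ n, BddAbove (Set.range fun t : Set.Icc t₀ (t₀ + T) =>
      ‖u t - un n t‖) := fun n => bdd _ (hucont.sub (huncont n))
  have hleD : ∀ n, ∀ t ∈ Set.Icc t₀ (t₀ + T), ‖u t - P n (u t)‖ ≤ D n := by
    intro n t ht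
    rw [hDdef]
    exact le_ciSup (hbddD n) (⟨t, ht⟩ : Set.Icc t₀ (t₀ + T))
  have hleE : ∀ n, ∀ t ∈ Set.Icc t₀ (t₀ + T), ‖u t - un n t‖ ≤ E n := by
    intro n t ht
    rw [hEdef]
    exact le_ciSup (hbddE n) (⟨t, ht⟩ : Set.Icc t₀ (t₀ + T))
  have hD0le : ∀ n, 0 ≤ D n := by
    intro n; rw [hDdef]; exact Real.iSup_nonneg fun t => norm_nonneg _
  have hE0le : ∀ n, 0 ≤ E n := by
    intro n; rw [hEdef]; exact Real.iSup_nonneg fun t => norm_nonneg _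
  -- main per-n estimates
  have main : ∀ n, n₀ < n →
      D n ≤ (1 + K * T) * E n ∧ E n ≤ Real.exp (K * T) * D n := by
    intro n hn
    set w : ℝ → X := fun t => P n (u t) - un n t with hwdef
    set r : ℝ → X := fun t => P n (W (F (u t)) - W (F (un n t))) with hrdef
    have hwcont : ContinuousOn (fun t => ‖w t‖) (Set.Icc t₀ (t₀ + T)) := by
      simp only [hwdef]
      exact continuous_norm.comp_continuousOn
        (((P n).continuous.comp_continuousOn hucont).sub (huncont n))
    have hw0 : w t₀ = 0 := by simp [hwdef, hu0, hun0 n]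
    have hdec : ∀ t, ‖u t - un n t‖ ≤ ‖u t - P n (u t)‖ + ‖w t‖ := by
      intro t
      have h : u t - un n t = (u t - P n (u t)) + w t := by simp only [hwdef]; abel
      rw [h]; exact norm_add_le _ _
    have hwderiv : ∀ t ∈ Set.Ico t₀ (t₀ + T),
        HasDerivWithinAt w (-w t + r t) (Set.Ici t) t := by
      intro t ht
      have htJ' : t ∈ Set.Icc t₀ (t₀ + T) := Set.mem_Icc_of_Ico ht
      have h1 : HasDerivWithinAt (fun s => P n (u s))
          (P n (-u t + W (F (u t)) + ξ t)) (Set.Ici t) t :=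
        (P n).hasFDerivAt.comp_hasDerivWithinAt t (hright ht (hu t htJ'))
      have h2 := hright ht (hun n t htJ')
      have h3 := h1.sub h2
      have hval : P n (-u t + W (F (u t)) + ξ t)
          - P n (-un n t + W (F (un n t)) + ξ t) = -w t + r t := by
        simp only [hwdef, hrdef, map_add, map_neg, map_sub]
        rw [hfix n t htJ']
        abel
      rw [hval] at h3
      exact h3
    have hrbound : ∀ t ∈ Set.Icc t₀ (t₀ + T), ‖r t‖ ≤ K * ‖u t - un n t‖ := by
      intro t ht
      have h1 : r t = ((P n).comp W) (F (u t) - F (un n t)) := by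
        simp [hrdef, map_sub]
      rw [h1, hKdef]
      calc ‖((P n).comp W) (F (u t) - F (un n t))‖
          ≤ ‖(P n).comp W‖ * ‖F (u t) - F (un n t)‖ := ((P n).comp W).le_opNorm _
        _ ≤ p * ((Lf : ℝ) * ‖u t - un n t‖) :=
            mul_le_mul (hp n hn) (hF _ _) (norm_nonneg _) hp0
        _ = p * (Lf : ℝ) * ‖u t - un n t‖ := by ring
    have hslope : ∀ t ∈ Set.Ico t₀ (t₀ + T), ∀ c : ℝ,
        (fun s => -‖w s‖ + ‖r s‖) t < c →
        ∃ᶠ z in nhdsWithin t (Set.Ioi t), (z - t)⁻¹ * (‖w z‖ - ‖w t‖) < c :=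
      fun t ht c hc => liminf_right_slope_dissipative (hwderiv t ht) hc
    -- upper estimate
    have hup : ∀ t ∈ Set.Icc t₀ (t₀ + T),
        ‖w t‖ ≤ gronwallBound 0 K (K * D n) (t - t₀) := by
      refine le_gronwallBound_of_liminf_deriv_right_le
        (f' := fun s => -‖w s‖ + ‖r s‖) hwcont hslope ?_ ?_
      · rw [hw0]; simp
      · intro t ht
        have htJ' : t ∈ Set.Icc t₀ (t₀ + T) := Set.mem_Icc_of_Ico ht
        have h1 : ‖u t - un n t‖ ≤ D n + ‖w t‖ :=
          (hdec t).trans (by gcongr; exact hleD n t htJ')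
        have h2 := hrbound t htJ'
        have h3 := mul_le_mul_of_nonneg_left h1 hK0
        nlinarith [norm_nonneg (w t)]
    have hupper : E n ≤ Real.exp (K * T) * D n := by
      rw [hEdef]
      refine ciSup_le ?_
      rintro ⟨t, ht⟩
      show ‖u t - un n t‖ ≤ _
      have h1 := hup t ht
      have hgb : gronwallBound 0 K (K * D n) (t - t₀) ≤
          D n * (Real.exp (K * T) - 1) := by
        rcases eq_or_ne K 0 with hK | hK
        · rw [hK, gronwallBound_K0]
          simp
        · have hKpos : 0 < K := lt_of_le_of_ne hK0 (Ne.symm hK)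
          simp only [gronwallBound_of_K_ne_0 hK]
          have ht1 : K * (t - t₀) ≤ K * T :=
            mul_le_mul_of_nonneg_left (by linarith [ht.2]) hK0
          have hexp : Real.exp (K * (t - t₀)) ≤ Real.exp (K * T) :=
            Real.exp_le_exp.mpr ht1
          have hdiv : K * D n / K = D n := by field_simp
          rw [hdiv, zero_mul, zero_add]
          nlinarith [hD0le n]
      calc ‖u t - un n t‖ ≤ ‖u t - P n (u t)‖ + ‖w t‖ := hdec t
        _ ≤ D n + D n * (Real.exp (K * T) - 1) :=
            add_le_add (hleD n t ht) (h1.trans hgb)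
        _ = Real.exp (K * T) * D n := by ring
    -- lower estimate
    have hlow : ∀ t ∈ Set.Icc t₀ (t₀ + T),
        ‖w t‖ ≤ gronwallBound 0 0 (K * E n) (t - t₀) := by
      refine le_gronwallBound_of_liminf_deriv_right_le
        (f' := fun s => -‖w s‖ + ‖r s‖) hwcont hslope ?_ ?_
      · rw [hw0]; simp
      · intro t ht
        have htJ' : t ∈ Set.Icc t₀ (t₀ + T) := Set.mem_Icc_of_Ico ht
        have h1 := hrbound t htJ'
        have h2 := mul_le_mul_of_nonneg_left (hleE n t htJ') hK0
        nlinarith [norm_nonneg (w t)]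
    have hlower : D n ≤ (1 + K * T) * E n := by
      rw [hDdef]
      refine ciSup_le ?_
      rintro ⟨t, ht⟩
      show ‖u t - P n (u t)‖ ≤ _
      have h1 := hlow t ht
      rw [gronwallBound_K0] at h1
      simp only [zero_add] at h1
      have h2 : ‖u t - P n (u t)‖ ≤ ‖u t - un n t‖ + ‖w t‖ := by
        have h : u t - P n (u t) = (u t - un n t) - w t := by simp only [hwdef]; abel
        rw [h]; exact norm_sub_le _ _
      have h3 : K * E n * (t - t₀) ≤ K * E n * T :=
        mul_le_mul_of_nonneg_left (by linarith [ht.2]) (mul_nonneg hK0 (hE0le n))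
      have h4 := hleE n t ht
      nlinarith
    exact ⟨hlower, hupper⟩
  -- Banach–Steinhaus and uniform convergence on the compact image
  obtain ⟨C, hC⟩ : ∃ C, ∀ n, ‖P n‖ ≤ C := by
    apply banach_steinhaus
    intro x
    obtain ⟨B, hB⟩ := ((hconv x).norm).bddAbove_range
    exact ⟨B, fun n => hB (Set.mem_range_self n)⟩
  have hC0 : 0 ≤ C := le_trans (norm_nonneg _) (hC 0)
  have hKu : IsCompact (u '' Set.Icc t₀ (t₀ + T)) :=
    hcompact.image_of_continuousOn hucont
  have key : ∀ ε : ℝ, 0 < ε →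
      ∀ᶠ n in atTop, ∀ x ∈ u '' Set.Icc t₀ (t₀ + T), ‖x - P n x‖ ≤ ε := by
    intro ε hε
    have h1C : (0 : ℝ) < 1 + C := by linarith
    have hρ : 0 < ε / (2 * (1 + C)) := by positivity
    set ρ : ℝ := ε / (2 * (1 + C)) with hρdef
    obtain ⟨s, hsub, hsfin, hcover⟩ := hKu.elim_finite_subcover_image
      (fun x _ => Metric.isOpen_ball (x := x) (ε := ρ))
      (fun x hx => Set.mem_biUnion hx (Metric.mem_ball_self hρ))
    have hev : ∀ᶠ n in atTop, ∀ y ∈ s, ‖y - P n y‖ ≤ ε / 2 := by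
      rw [Set.Finite.eventually_all hsfin]
      intro y _
      have h2 := Metric.tendsto_nhds.mp (hconv y) (ε / 2) (by positivity)
      filter_upwards [h2] with m hm
      rw [dist_eq_norm] at hm
      rw [norm_sub_rev]
      exact hm.le
    filter_upwards [hev] with n hn x hx
    obtain ⟨y, hys, hxy⟩ := Set.mem_iUnion₂.mp (hcover hx)
    have hdxy : ‖x - y‖ < ρ := by
      rw [← dist_eq_norm]; exact Metric.mem_ball.mp hxy
    have hPyx : ‖P n y - P n x‖ ≤ C * ρ := by
      rw [← map_sub]
      calc ‖P n (y - x)‖ ≤ ‖P n‖ * ‖y - x‖ := (P n).le_opNorm _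
        _ ≤ C * ρ := by
            refine mul_le_mul (hC n) ?_ (norm_nonneg _) hC0
            rw [norm_sub_rev]; exact hdxy.le
    have hsum : (1 + C) * ρ = ε / 2 := by rw [hρdef]; field_simp
    calc ‖x - P n x‖ = ‖(x - y) + (y - P n y) + (P n y - P n x)‖ := by congr 1; abel
      _ ≤ ‖x - y‖ + ‖y - P n y‖ + ‖P n y - P n x‖ := norm_add₃_le
      _ ≤ ρ + ε / 2 + C * ρ := add_le_add (add_le_add hdxy.le (hn y hys)) hPyx
      _ = ε / 2 + (1 + C) * ρ := by ring
      _ = ε := by rw [hsum]; ring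
  have hDtend : Tendsto D atTop (nhds 0) := by
    rw [Metric.tendsto_atTop]
    intro ε hε
    obtain ⟨N, hN⟩ := eventually_atTop.mp (key (ε / 2) (by positivity))
    refine ⟨N, fun n hnN => ?_⟩
    rw [Real.dist_eq, sub_zero, abs_of_nonneg (hD0le n)]
    have hDle : D n ≤ ε / 2 := by
      rw [hDdef]
      refine ciSup_le ?_
      rintro ⟨t, ht⟩
      exact hN n hnN (u t) (Set.mem_image_of_mem u ht)
    linarith
  have hEtend : Tendsto E atTop (nhds 0) := by
    refine squeeze_zero' (g := fun n => Real.exp (K * T) * D n) (Eventually.of_forall hE0le) ?_ ?_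
    · filter_upwards [eventually_gt_atTop n₀] with n hn
      exact (main n hn).2
    · have h := hDtend.const_mul (Real.exp (K * T))
      rwa [mul_zero] at h
  constructor
  · have hgoal := hEtend
    rw [hEdef] at hgoal
    exact hgoal
  · intro n hn
    have hKT : K * T = p * T * (Lf : ℝ) := by rw [hKdef]; ring
    have hβ0 : 0 ≤ p * T * (Lf : ℝ) := by rw [← hKT]; exact mul_nonneg hK0 hT
    have hpos : (0 : ℝ) < 1 + p * T * (Lf : ℝ) := by linarith
    have hgoal1 : (1 + p * T * (Lf : ℝ))⁻¹ * D n ≤ E n := by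
      rw [inv_mul_le_iff₀ hpos]
      calc D n ≤ (1 + K * T) * E n := (main n hn).1
        _ = (1 + p * T * (Lf : ℝ)) * E n := by rw [hKT]
    have hgoal2 : E n ≤ Real.exp (p * T * (Lf : ℝ)) * D n := by
      rw [← hKT]; exact (main n hn).2
    constructor
    · have := hgoal1
      rw [hDdef, hEdef] at this
      exact this
    · have := hgoal2
      rw [hDdef, hEdef] at this
      exact this
end

section
/- Conversely, if ‖P_n W‖ ≤ p for n > n₀ and there exists z₀ ∈ X such that P_n z₀ does not converge to z₀, then there exist solutions z of the neural field problem and z_n of the projected problem (with initial data z₀ and P_n z₀, respectively) such that z_n − z does not converge to 0 in C(J, X). -/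
open Filter

private lemma hasDerivWithinAt_of_nmem_closure' {X : Type*} [NormedAddCommGroup X]
    [NormedSpace ℝ X] {f : ℝ → X} {y : X} {s : Set ℝ} {x : ℝ} (h : x ∉ closure s) :
    HasDerivWithinAt f y s x :=
  HasFDerivWithinAt.of_notMem_closure h

open Set in
/-- Existence of solutions on `[a, b]` for a globally Lipschitz ODE, by induction on the
number of Picard–Lindelöf steps of length `1/(2*(L+1))`. -/
lemma ode_exists_aux
    {X : Type*} [NormedAddCommGroup X] [NormedSpace ℝ X] [CompleteSpace X]
    (v : ℝ → X → X) (L : NNReal) (hl : ∀ t, LipschitzWith L (v t))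
    (hc : ∀ x, Continuous fun t => v t x) :
    ∀ (n : ℕ) (a b : ℝ), a ≤ b → b - a ≤ n * (1 / (2 * ((L : ℝ) + 1))) → ∀ x₀ : X,
      ∃ f : ℝ → X, f a = x₀ ∧ ∀ t ∈ Icc a b, HasDerivWithinAt f (v t (f t)) (Icc a b) t := by
  set h : ℝ := 1 / (2 * ((L : ℝ) + 1)) with hh_def
  have hL0 : (0 : ℝ) ≤ L := L.coe_nonneg
  have hh_pos : 0 < h := by positivity
  have hLh : (L : ℝ) * h ≤ 1 / 2 := by
    rw [hh_def]
    rw [mul_one_div, div_le_div_iff₀ (by positivity) (by norm_num)]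
    nlinarith
  intro n
  induction n with
  | zero =>
    intro a b hab hba x₀
    have hba' : b = a := le_antisymm (by simpa using hba) hab
    subst hba'
    refine ⟨fun _ => x₀, rfl, ?_⟩
    intro t ht
    simp only [Icc_self, mem_singleton_iff] at ht
    subst ht
    rw [Icc_self, ← hasDerivWithinAt_diff_singleton]
    have hempty : ({t} : Set ℝ) \ {t} = ∅ := by simp
    rw [hempty]
    exact hasDerivWithinAt_of_nmem_closure' (by simp)
  | succ n ih =>
    intro a b hab hba x₀
    set c : ℝ := min b (a + h) with hc_def
    have hac : a ≤ c := le_min hab (by linarith)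
    have hcb : c ≤ b := min_le_left _ _
    have hca : c - a ≤ h := by
      have : c ≤ a + h := min_le_right _ _
      linarith
    have hbc : b - c ≤ n * h := by
      rcases le_or_gt b (a + h) with hb | hb
      · have : c = b := min_eq_left hb
        rw [this]; simp [mul_nonneg (Nat.cast_nonneg n) hh_pos.le]
      · have : c = a + h := min_eq_right hb.le
        rw [this]
        push_cast at hba ⊢
        linarith
    -- Local existence on [a, c] via Picard–Lindelöf.
    obtain ⟨M', hM'⟩ : ∃ M, ∀ t ∈ Icc a c, ‖v t x₀‖ ≤ M := by
      obtain ⟨M, hM⟩ := (isCompact_Icc (a := a) (b := c)).exists_bound_of_continuousOn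
        ((hc x₀).norm.continuousOn)
      exact ⟨M, fun t ht => by simpa using hM t ht⟩
    set M : ℝ := max M' 0 with hM_def
    have hM0 : 0 ≤ M := le_max_right _ _
    have hM : ∀ t ∈ Icc a c, ‖v t x₀‖ ≤ M := fun t ht => (hM' t ht).trans (le_max_left _ _)
    set R : ℝ := 2 * M * h + 1 with hR_def
    have hR0 : (0 : ℝ) ≤ R := by positivity
    set C : ℝ := M + L * R with hC_def
    have hC0 : 0 ≤ C := by positivity
    have hpl : IsPicardLindelof v (⟨a, le_refl a, hac⟩ : Icc a c) x₀ ⟨R, hR0⟩ 0 ⟨C, hC0⟩ L := by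
      refine ⟨fun t _ => (hl t).lipschitzOnWith,
        fun x _ => (hc x).continuousOn, ?_, ?_⟩
      · intro t ht x hx
        have h1 : ‖v t x - v t x₀‖ ≤ L * R := by
          have := (hl t).dist_le_mul x x₀
          rw [dist_eq_norm] at this
          refine this.trans ?_
          have : dist x x₀ ≤ R := Metric.mem_closedBall.mp hx
          nlinarith [dist_nonneg (x := x) (y := x₀)]
        calc ‖v t x‖ = ‖v t x₀ + (v t x - v t x₀)‖ := by congr 1; abel
          _ ≤ ‖v t x₀‖ + ‖v t x - v t x₀‖ := norm_add_le _ _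
          _ ≤ M + L * R := add_le_add (hM t ht) h1
      · show C * max (c - a) (a - a) ≤ R - 0
        have hmax : max (c - a) (a - a) = c - a := by
          rw [max_eq_left]; linarith
        rw [hmax]
        have h1 : C * (c - a) ≤ C * h := by
          apply mul_le_mul_of_nonneg_left hca hC0
        refine h1.trans ?_
        rw [hC_def, hR_def]
        nlinarith
    obtain ⟨f₁, hf₁0, hf₁⟩ := IsPicardLindelof.exists_eq_forall_mem_Icc_hasDerivWithinAt₀ hpl
    have hf₁0 : f₁ a = x₀ := hf₁0
    -- Solution on [c, b] via induction hypothesis.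
    obtain ⟨f₂, hf₂0, hf₂⟩ := ih c b hcb hbc (f₁ c)
    -- Glue.
    refine ⟨fun t => if t ≤ c then f₁ t else f₂ t, by simp [hac, hf₁0], ?_⟩
    set f : ℝ → X := fun t => if t ≤ c then f₁ t else f₂ t with hf_def
    have hf_eq₁ : ∀ t ∈ Icc a c, f t = f₁ t := fun t ht => if_pos ht.2
    have hf_eq₂ : ∀ t ∈ Icc c b, f t = f₂ t := by
      intro t ht
      rcases lt_or_eq_of_le ht.1 with hlt | heq
      · exact if_neg (not_le.mpr hlt)
      · simp [f, ← heq, hf₂0]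
    have hIcc : Icc a b = Icc a c ∪ Icc c b := (Icc_union_Icc_eq_Icc hac hcb).symm
    intro t ht
    rw [hIcc]
    rcases lt_trichotomy t c with hlt | heq | hgt
    · have ht1 : t ∈ Icc a c := ⟨ht.1, hlt.le⟩
      have hd1 : HasDerivWithinAt f (v t (f t)) (Icc a c) t := by
        rw [hf_eq₁ t ht1]
        exact ((hf₁ t ht1).congr (fun y hy => hf_eq₁ y hy) (hf_eq₁ t ht1))
      have hd2 : HasDerivWithinAt f (v t (f t)) (Icc c b) t :=
        hasDerivWithinAt_of_nmem_closure'
          (by rw [closure_Icc]; rintro ⟨h1, -⟩; exact absurd h1 (not_le.mpr hlt))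
      exact hd1.union hd2
    · have ht1 : t ∈ Icc a c := ⟨ht.1, heq.le⟩
      have ht2 : t ∈ Icc c b := ⟨heq.ge, ht.2⟩
      have hd1 : HasDerivWithinAt f (v t (f t)) (Icc a c) t := by
        rw [hf_eq₁ t ht1]
        exact ((hf₁ t ht1).congr (fun y hy => hf_eq₁ y hy) (hf_eq₁ t ht1))
      have hd2 : HasDerivWithinAt f (v t (f t)) (Icc c b) t := by
        rw [hf_eq₂ t ht2]
        exact ((hf₂ t ht2).congr (fun y hy => hf_eq₂ y hy) (hf_eq₂ t ht2))
      exact hd1.union hd2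
    · have ht2 : t ∈ Icc c b := ⟨hgt.le, ht.2⟩
      have hd2 : HasDerivWithinAt f (v t (f t)) (Icc c b) t := by
        rw [hf_eq₂ t ht2]
        exact ((hf₂ t ht2).congr (fun y hy => hf_eq₂ y hy) (hf_eq₂ t ht2))
      have hd1 : HasDerivWithinAt f (v t (f t)) (Icc a c) t :=
        hasDerivWithinAt_of_nmem_closure'
          (by rw [closure_Icc]; rintro ⟨-, h2⟩; exact absurd h2 (not_le.mpr hgt))
      exact hd1.union hd2

open Set in
/-- Global existence on a compact interval for a globally Lipschitz ODE. -/
lemma ode_exists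
    {X : Type*} [NormedAddCommGroup X] [NormedSpace ℝ X] [CompleteSpace X]
    (v : ℝ → X → X) (L : NNReal) (hl : ∀ t, LipschitzWith L (v t))
    (hc : ∀ x, Continuous fun t => v t x) (a b : ℝ) (hab : a ≤ b) (x₀ : X) :
    ∃ f : ℝ → X, f a = x₀ ∧ ∀ t ∈ Icc a b, HasDerivWithinAt f (v t (f t)) (Icc a b) t := by
  set h : ℝ := 1 / (2 * ((L : ℝ) + 1))
  have hh_pos : 0 < h := by positivity
  obtain ⟨n, hn⟩ := exists_nat_ge ((b - a) / h)
  have : b - a ≤ n * h := by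
    rw [div_le_iff₀ hh_pos] at hn
    linarith
  exact ode_exists_aux v L hl hc n a b hab this x₀

/-- If `‖P_n W‖ ≤ p` eventually and `P_n z₀` does not converge to `z₀` for some
`z₀ ∈ X`, then there exist solutions `z` of the neural field problem and `z_n` of
the projected problems (with initial data `z₀` and `P_n z₀`) such that `z_n - z`
does not converge to `0` in `C(J,X)`. -/
theorem projection_scheme_nonconvergence
    {X : Type*} [NormedAddCommGroup X] [NormedSpace ℝ X] [CompleteSpace X]
    (W : X →L[ℝ] X) (hWc : IsCompactOperator W)
    (F : X → X) (Lf : NNReal) (hFlip : LipschitzWith Lf F)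
    (ξ : ℝ → X) (hξ : Continuous ξ)
    (t₀ T : ℝ) (hT : 0 < T)
    (P : ℕ → X →L[ℝ] X) (hidem : ∀ n, (P n).comp (P n) = P n)
    (p : ℝ) (n₀ : ℕ) (hp : ∀ n > n₀, ‖(P n).comp W‖ ≤ p)
    (z₀ : X) (hz₀ : ¬ Tendsto (fun n => P n z₀) atTop (nhds z₀)) :
    ∃ (z : ℝ → X) (zn : ℕ → ℝ → X),
      (z t₀ = z₀ ∧ ∀ t ∈ Set.Icc t₀ (t₀ + T),
        HasDerivWithinAt z (-z t + W (F (z t)) + ξ t) (Set.Icc t₀ (t₀ + T)) t) ∧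
      (∀ n, zn n t₀ = P n z₀ ∧ ∀ t ∈ Set.Icc t₀ (t₀ + T),
        HasDerivWithinAt (zn n) (P n (-zn n t + W (F (zn n t)) + ξ t))
          (Set.Icc t₀ (t₀ + T)) t) ∧
      ¬ Tendsto (fun n => ⨆ t : Set.Icc t₀ (t₀ + T), ‖z t - zn n t‖)
          atTop (nhds 0) := by
  have hab : t₀ ≤ t₀ + T := by linarith
  set L' : NNReal := 1 + ‖W‖₊ * Lf with hL'
  have hlip : ∀ t, LipschitzWith L' (fun u : X => -u + W (F u) + ξ t) := by
    intro t
    have h1 : LipschitzWith 1 (fun u : X => -u) := LipschitzWith.id.neg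
    have h2 : LipschitzWith (‖W‖₊ * Lf) (fun u : X => W (F u)) := W.lipschitz.comp hFlip
    have h12 : LipschitzWith L' (fun u : X => -u + W (F u)) := h1.add h2
    have := h12.add (LipschitzWith.const (ξ t))
    simpa using this
  -- Solution of the full problem.
  obtain ⟨z, hz0, hzd⟩ := ode_exists (fun t u => -u + W (F u) + ξ t) L' hlip
    (fun x => by fun_prop) t₀ (t₀ + T) hab z₀
  -- Solutions of the projected problems.
  have hzn : ∀ n : ℕ, ∃ f : ℝ → X, f t₀ = P n z₀ ∧ ∀ t ∈ Set.Icc t₀ (t₀ + T),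
      HasDerivWithinAt f (P n (-f t + W (F (f t)) + ξ t)) (Set.Icc t₀ (t₀ + T)) t := by
    intro n
    have hlipn : ∀ t, LipschitzWith (‖P n‖₊ * L')
        (fun u : X => P n (-u + W (F u) + ξ t)) :=
      fun t => (P n).lipschitz.comp (hlip t)
    exact ode_exists (fun t u => P n (-u + W (F u) + ξ t)) (‖P n‖₊ * L') hlipn
      (fun x => by fun_prop) t₀ (t₀ + T) hab (P n z₀)
  choose zn hzn0 hznd using hzn
  refine ⟨z, zn, ⟨hz0, hzd⟩, fun n => ⟨hzn0 n, hznd n⟩, ?_⟩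
  -- Nonconvergence of the sup norms.
  intro htend
  apply hz₀
  rw [tendsto_iff_norm_sub_tendsto_zero]
  have ht₀mem : t₀ ∈ Set.Icc t₀ (t₀ + T) := ⟨le_refl _, hab⟩
  have key : ∀ n, ‖P n z₀ - z₀‖ ≤ ⨆ t : Set.Icc t₀ (t₀ + T), ‖z t - zn n t‖ := by
    intro n
    have hzc : ContinuousOn z (Set.Icc t₀ (t₀ + T)) :=
      fun t ht => (hzd t ht).continuousWithinAt
    have hznc : ContinuousOn (zn n) (Set.Icc t₀ (t₀ + T)) :=
      fun t ht => (hznd n t ht).continuousWithinAt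
    have hcont : ContinuousOn (fun t => ‖z t - zn n t‖) (Set.Icc t₀ (t₀ + T)) :=
      (hzc.sub hznc).norm
    have hbdd : BddAbove (Set.range fun t : Set.Icc t₀ (t₀ + T) => ‖z t - zn n t‖) := by
      obtain ⟨B, hB⟩ := isCompact_Icc.exists_bound_of_continuousOn hcont
      refine ⟨B, ?_⟩
      rintro y ⟨t, rfl⟩
      exact (le_abs_self _).trans (by simpa [Real.norm_eq_abs] using hB t t.2)
    have := le_ciSup hbdd (⟨t₀, ht₀mem⟩ : Set.Icc t₀ (t₀ + T))
    simpa [hz0, hzn0 n, norm_sub_rev] using this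
  exact squeeze_zero (fun n => norm_nonneg _) key htend
end

section
/- Combining the projection and time-stepping errors: under the standing hypotheses and u_n ∈ C²(J,X), the Forward Euler projection scheme satisfies max over nodes t_k ∈ [t₀, t₀+T] of ‖u(t_k) − U_n(t_k)‖ ≤ (e^{T L_n} − 1)/L_n · τ_n(h_t) + e^{β_n} ‖u − P_n u‖_{C(J,X)}, where β_n = T‖P_n W‖‖f'‖_∞, L_n = 1 + β_n/T, τ_n(h_t) = ‖u_n''‖_{C(J,X)} h_t/2. -/
open Set

lemma taylor_step_aux {X : Type*} [NormedAddCommGroup X] [NormedSpace ℝ X]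
    (un un' : ℝ → X) (a b M2 : ℝ) (hab : a ≤ b)
    (hder : ∀ t ∈ Set.Icc a b, HasDerivWithinAt un (un' t) (Set.Icc a b) t)
    (hlip : ∀ t ∈ Set.Icc a b, ‖un' t - un' a‖ ≤ M2 * (t - a)) :
    ‖un b - un a - (b - a) • un' a‖ ≤ M2 * (b - a) ^ 2 / 2 := by
  set f : ℝ → X := fun t => un t - un a - (t - a) • un' a with hf
  have hfc : ContinuousOn f (Icc a b) := by
    apply ContinuousOn.sub
    · exact ContinuousOn.sub (fun t ht => (hder t ht).continuousWithinAt) continuousOn_const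
    · exact (Continuous.smul (by continuity) continuous_const).continuousOn
  have hf' : ∀ t ∈ Ico a b, HasDerivWithinAt f (un' t - un' a) (Ici t) t := by
    intro t ht
    have h1 : HasDerivWithinAt un (un' t) (Ici t) t :=
      (hder t (Ico_subset_Icc_self ht)).mono_of_mem_nhdsWithin (Icc_mem_nhdsGE_of_mem ht)
    have h2 : HasDerivAt (fun s : ℝ => (s - a) • un' a) ((1 : ℝ) • un' a) t :=
      ((hasDerivAt_id t).sub_const a).smul_const (un' a)
    have := (h1.sub (hasDerivWithinAt_const t _ (un a))).sub h2.hasDerivWithinAt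
    simp only [one_smul, sub_zero] at this
    exact this
  have key := image_norm_le_of_norm_deriv_right_le_deriv_boundary
    (f' := fun t => un' t - un' a) hfc hf'
    (B := fun t => M2 * (t - a) ^ 2 / 2) (B' := fun t => M2 * (t - a)) ?_ ?_ ?_ (right_mem_Icc.2 hab)
  · simpa [hf] using key
  · simp [hf]
  · intro x
    have : HasDerivAt (fun t : ℝ => M2 * (t - a) ^ 2 / 2)
        (M2 * ((2 : ℕ) * (x - a) ^ 1 * 1) / 2) x :=
      ((((hasDerivAt_id x).sub_const a).pow 2).const_mul M2).div_const 2
    convert this using 1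
    ring
  · intro x hx
    exact hlip x (Ico_subset_Icc_self hx)

lemma damped_gronwall_aux {X : Type*} [NormedAddCommGroup X] [NormedSpace ℝ X]
    (d g : ℝ → X) (t₀ T κ Mp : ℝ) (hT : 0 ≤ T) (hκ : 0 ≤ κ) (hMp : 0 ≤ Mp)
    (hd0 : d t₀ = 0)
    (hder : ∀ t ∈ Set.Icc t₀ (t₀ + T),
      HasDerivWithinAt d (-(d t) + g t) (Set.Icc t₀ (t₀ + T)) t)
    (hg : ∀ t ∈ Set.Icc t₀ (t₀ + T), ‖g t‖ ≤ κ * (Mp + ‖d t‖)) :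
    ∀ t ∈ Set.Icc t₀ (t₀ + T), ‖d t‖ ≤ Mp * (Real.exp (κ * T) - 1) := by
  set L : ℝ := 1 + κ with hLdef
  have hL1 : (1 : ℝ) ≤ L := by simp [hLdef, hκ]
  have hL0 : (0 : ℝ) < L := lt_of_lt_of_le one_pos hL1
  set h : ℝ → X := fun t => Real.exp (t - t₀) • d t with hhdef
  have hdc : ContinuousOn d (Icc t₀ (t₀ + T)) := fun t ht => (hder t ht).continuousWithinAt
  have hhc : ContinuousOn h (Icc t₀ (t₀ + T)) := by
    apply ContinuousOn.smul _ hdc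
    exact (Real.continuous_exp.comp (continuous_id.sub continuous_const)).continuousOn
  have hh' : ∀ t ∈ Icc t₀ (t₀ + T),
      HasDerivWithinAt h (Real.exp (t - t₀) • g t) (Icc t₀ (t₀ + T)) t := by
    intro t ht
    have hc : HasDerivWithinAt (fun s : ℝ => Real.exp (s - t₀)) (Real.exp (t - t₀))
        (Icc t₀ (t₀ + T)) t := by
      have := (((hasDerivAt_id t).sub_const t₀).exp).hasDerivWithinAt
        (s := Icc t₀ (t₀ + T))
      simpa using this
    have := hc.smul (hder t ht)
    convert this using 1
    · rfl
    rw [smul_add, smul_neg]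
    abel
  have key : ∀ ε : ℝ, 0 < ε → ∀ t ∈ Icc t₀ (t₀ + T),
      ‖h t‖ ≤ Mp * (Real.exp (L * (t - t₀)) - Real.exp (t - t₀)) + ε * Real.exp (L * (t - t₀)) := by
    intro ε hε
    have hB : ∀ x : ℝ, HasDerivAt
        (fun t => Mp * (Real.exp (L * (t - t₀)) - Real.exp (t - t₀)) + ε * Real.exp (L * (t - t₀)))
        (Mp * (L * Real.exp (L * (x - t₀)) - Real.exp (x - t₀)) + ε * (L * Real.exp (L * (x - t₀)))) x := by
      intro x
      have e1 : HasDerivAt (fun t : ℝ => Real.exp (L * (t - t₀)))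
          (Real.exp (L * (x - t₀)) * L) x := by
        have : HasDerivAt (fun t : ℝ => L * (t - t₀)) L x := by
          simpa using ((hasDerivAt_id x).sub_const t₀).const_mul L
        exact this.exp
      have e2 : HasDerivAt (fun t : ℝ => Real.exp (t - t₀)) (Real.exp (x - t₀)) x := by
        simpa using ((hasDerivAt_id x).sub_const t₀).exp
      have := ((e1.sub e2).const_mul Mp).add (e1.const_mul ε)
      convert this using 1
      · rfl
      · rfl
      · rfl
      ring
    apply image_norm_le_of_norm_deriv_right_lt_deriv_boundary
      (f' := fun t => Real.exp (t - t₀) • g t) hhc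
      (fun x hx => (hh' x (Ico_subset_Icc_self hx)).mono_of_mem_nhdsWithin
        (Icc_mem_nhdsGE_of_mem hx))
      (by simp [hhdef, hd0]; positivity) hB
    intro x hx hEq
    have hxI := Ico_subset_Icc_self hx
    have hs0 : 0 ≤ x - t₀ := by linarith [hx.1]
    have hexp : Real.exp (x - t₀) ≤ Real.exp (L * (x - t₀)) := by
      apply Real.exp_le_exp.2
      nlinarith
    have hnorm : ‖Real.exp (x - t₀) • g x‖ = Real.exp (x - t₀) * ‖g x‖ := by
      rw [norm_smul, Real.norm_eq_abs, abs_of_pos (Real.exp_pos _)]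
    have hhx : ‖h x‖ = Real.exp (x - t₀) * ‖d x‖ := by
      rw [hhdef]; rw [norm_smul, Real.norm_eq_abs, abs_of_pos (Real.exp_pos _)]
    have hb1 : ‖Real.exp (x - t₀) • g x‖ ≤ κ * Mp * Real.exp (x - t₀) + κ * ‖h x‖ := by
      rw [hnorm, hhx]
      have := hg x hxI
      nlinarith [Real.exp_pos (x - t₀)]
    rw [hEq] at hb1
    calc ‖Real.exp (x - t₀) • g x‖
        ≤ κ * Mp * Real.exp (x - t₀) + κ *
          (Mp * (Real.exp (L * (x - t₀)) - Real.exp (x - t₀)) + ε * Real.exp (L * (x - t₀))) := hb1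
      _ < Mp * (L * Real.exp (L * (x - t₀)) - Real.exp (x - t₀)) + ε * (L * Real.exp (L * (x - t₀))) := by
          have hp := Real.exp_pos (L * (x - t₀))
          have hkey : Mp * (L * Real.exp (L * (x - t₀)) - Real.exp (x - t₀))
              + ε * (L * Real.exp (L * (x - t₀)))
              - (κ * Mp * Real.exp (x - t₀) + κ *
                (Mp * (Real.exp (L * (x - t₀)) - Real.exp (x - t₀)) + ε * Real.exp (L * (x - t₀))))
              = Mp * (Real.exp (L * (x - t₀)) - Real.exp (x - t₀)) + ε * Real.exp (L * (x - t₀)) := by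
            rw [hLdef]; ring
          nlinarith [mul_nonneg hMp (sub_nonneg.2 hexp), mul_pos hε hp]
  have key2 : ∀ t ∈ Icc t₀ (t₀ + T),
      ‖h t‖ ≤ Mp * (Real.exp (L * (t - t₀)) - Real.exp (t - t₀)) := by
    intro t ht
    apply le_of_forall_pos_le_add
    intro ε hε
    have hε' : 0 < ε / Real.exp (L * T) := div_pos hε (Real.exp_pos _)
    have := key _ hε' t ht
    have hmono : Real.exp (L * (t - t₀)) ≤ Real.exp (L * T) := by
      apply Real.exp_le_exp.2
      have : t - t₀ ≤ T := by linarith [ht.2]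
      nlinarith
    calc ‖h t‖ ≤ Mp * (Real.exp (L * (t - t₀)) - Real.exp (t - t₀))
          + ε / Real.exp (L * T) * Real.exp (L * (t - t₀)) := this
      _ ≤ Mp * (Real.exp (L * (t - t₀)) - Real.exp (t - t₀)) + ε := by
          have h1 : ε / Real.exp (L * T) * Real.exp (L * (t - t₀)) ≤ ε := by
            rw [div_mul_eq_mul_div, div_le_iff₀ (Real.exp_pos _)]
            nlinarith [Real.exp_pos (L * (t - t₀))]
          linarith
  intro t ht
  have hs0 : 0 ≤ t - t₀ := by linarith [ht.1]
  have hsT : t - t₀ ≤ T := by linarith [ht.2]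
  have hhx : ‖h t‖ = Real.exp (t - t₀) * ‖d t‖ := by
    rw [hhdef]; rw [norm_smul, Real.norm_eq_abs, abs_of_pos (Real.exp_pos _)]
  have h1 : Real.exp (t - t₀) * ‖d t‖ ≤ Mp * (Real.exp (L * (t - t₀)) - Real.exp (t - t₀)) := by
    rw [← hhx]; exact key2 t ht
  have hfact : Real.exp (L * (t - t₀)) = Real.exp (t - t₀) * Real.exp (κ * (t - t₀)) := by
    rw [← Real.exp_add, hLdef]; ring_nf
  have h2 : ‖d t‖ ≤ Mp * (Real.exp (κ * (t - t₀)) - 1) := by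
    rw [hfact] at h1
    have hp := Real.exp_pos (t - t₀)
    rw [← mul_le_mul_iff_right₀ hp]
    calc Real.exp (t - t₀) * ‖d t‖
        ≤ Mp * (Real.exp (t - t₀) * Real.exp (κ * (t - t₀)) - Real.exp (t - t₀)) := h1
      _ = Real.exp (t - t₀) * (Mp * (Real.exp (κ * (t - t₀)) - 1)) := by ring
  calc ‖d t‖ ≤ Mp * (Real.exp (κ * (t - t₀)) - 1) := h2
    _ ≤ Mp * (Real.exp (κ * T) - 1) := by
        apply mul_le_mul_of_nonneg_left _ hMp
        have : Real.exp (κ * (t - t₀)) ≤ Real.exp (κ * T) := by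
          apply Real.exp_le_exp.2; nlinarith
        linarith

/-- Combined Forward Euler + projection error:
`max_k ‖u(t_k) - U_n(t_k)‖ ≤ (e^{T L_n} - 1)/L_n · τ_n(h_t) + e^{β_n} ‖u - P_n u‖_{C(J,X)}`
with `β_n = T‖P_n W‖‖f'‖_∞`, `L_n = 1 + β_n/T`, `τ_n(h_t) = ‖u_n''‖_{C(J,X)} h_t / 2`. -/
theorem forward_euler_projection_total_error
    {X : Type*} [NormedAddCommGroup X] [NormedSpace ℝ X] [CompleteSpace X]
    (W : X →L[ℝ] X) (F : X → X) (Lf : NNReal) (hFlip : LipschitzWith Lf F)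
    (ξ : ℝ → X) (hξ : Continuous ξ)
    (t₀ T : ℝ) (hT : 0 ≤ T) (u₀ : X)
    (P : X →L[ℝ] X) (hidem : P.comp P = P)
    (u : ℝ → X) (hu0 : u t₀ = u₀)
    (hu : ∀ t ∈ Set.Icc t₀ (t₀ + T),
      HasDerivWithinAt u (-u t + W (F (u t)) + ξ t) (Set.Icc t₀ (t₀ + T)) t)
    (Mproj : ℝ) (hMproj : ∀ t ∈ Set.Icc t₀ (t₀ + T), ‖u t - P (u t)‖ ≤ Mproj)
    (un un' un'' : ℝ → X) (hun0 : un t₀ = P u₀)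
    (hund : ∀ t ∈ Set.Icc t₀ (t₀ + T),
      HasDerivWithinAt un (un' t) (Set.Icc t₀ (t₀ + T)) t)
    (heq : ∀ t ∈ Set.Icc t₀ (t₀ + T), un' t = P (-un t + W (F (un t)) + ξ t))
    (hund' : ∀ t ∈ Set.Icc t₀ (t₀ + T),
      HasDerivWithinAt un' (un'' t) (Set.Icc t₀ (t₀ + T)) t)
    (M2 : ℝ) (hM2 : ∀ t ∈ Set.Icc t₀ (t₀ + T), ‖un'' t‖ ≤ M2)
    (ht : ℝ) (hht : 0 < ht)
    (U : ℕ → X) (hU0 : U 0 = P u₀)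
    (hUstep : ∀ k : ℕ,
      U (k + 1) = U k + ht • P (-(U k) + W (F (U k)) + ξ (t₀ + k * ht))) :
    ∀ k : ℕ, t₀ + k * ht ≤ t₀ + T →
      ‖u (t₀ + k * ht) - U k‖ ≤
        (Real.exp (T * (1 + ‖P.comp W‖ * Lf)) - 1) / (1 + ‖P.comp W‖ * Lf) *
          (M2 * ht / 2) +
        Real.exp (T * ‖P.comp W‖ * Lf) * Mproj := by
  have hPP : ∀ x, P (P x) = P x := by
    intro x
    have := DFunLike.congr_fun hidem x
    simpa using this
  have ht₀J : t₀ ∈ Set.Icc t₀ (t₀ + T) := ⟨le_rfl, by linarith⟩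
  have hMp0 : 0 ≤ Mproj := le_trans (norm_nonneg _) (hMproj t₀ ht₀J)
  have hM20 : 0 ≤ M2 := le_trans (norm_nonneg _) (hM2 t₀ ht₀J)
  set κ : ℝ := ‖P.comp W‖ * (Lf : ℝ) with hκdef
  have hκ0 : 0 ≤ κ := mul_nonneg (norm_nonneg _) Lf.coe_nonneg
  set L : ℝ := 1 + κ with hLdef
  have hL0 : (0 : ℝ) < L := by rw [hLdef]; linarith
  clear_value L κ
  have hFn : ∀ a b : X, ‖F a - F b‖ ≤ (Lf : ℝ) * ‖a - b‖ := by
    intro a b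
    simpa [dist_eq_norm] using hFlip.dist_le_mul a b
  -- un stays in the range of P
  have hPun : ∀ t ∈ Set.Icc t₀ (t₀ + T), P (un t) = un t := by
    intro t htJ
    have hder : ∀ s ∈ Set.Icc t₀ (t₀ + T),
        HasDerivWithinAt (fun r => un r - P (un r)) (0 : X) (Set.Icc t₀ (t₀ + T)) s := by
      intro s hs
      have h2 : HasDerivWithinAt (fun r => P (un r)) (P (un' s)) (Set.Icc t₀ (t₀ + T)) s :=
        P.hasFDerivAt.comp_hasDerivWithinAt s (hund s hs)
      have h3 := (hund s hs).sub h2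
      have h4 : un' s - P (un' s) = 0 := by
        rw [heq s hs, hPP, sub_self]
      rwa [h4] at h3
    have h0 := (convex_Icc t₀ (t₀ + T)).norm_image_sub_le_of_norm_hasDerivWithin_le
      (C := 0) hder (fun s _ => by simp) ht₀J htJ
    have h5 : un t₀ - P (un t₀) = 0 := by
      rw [hun0, hPP, sub_self]
    rw [h5, sub_zero] at h0
    have h6 : un t - P (un t) = 0 := by
      rw [zero_mul] at h0
      rwa [norm_le_zero_iff] at h0
    exact (sub_eq_zero.1 h6).symm
  -- U stays in the range of P
  have hPU : ∀ k : ℕ, P (U k) = U k := by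
    intro k
    induction k with
    | zero => rw [hU0, hPP]
    | succ k ih => rw [hUstep k, map_add, ih, map_smul, hPP]
  -- projection error via damped Gronwall
  have hproj : ∀ t ∈ Set.Icc t₀ (t₀ + T),
      ‖u t - un t‖ ≤ Real.exp (κ * T) * Mproj := by
    have hdg := damped_gronwall_aux (fun t => P (u t) - un t)
      (fun t => (P.comp W) (F (u t) - F (un t))) t₀ T κ Mproj hT hκ0 hMp0
      (by simp [hu0, hun0]) ?_ ?_
    · intro t htJ
      have h1 : u t - un t = (u t - P (u t)) + (P (u t) - un t) := by abel
      calc ‖u t - un t‖ ≤ ‖u t - P (u t)‖ + ‖P (u t) - un t‖ := by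
            rw [h1]; exact norm_add_le _ _
        _ ≤ Mproj + Mproj * (Real.exp (κ * T) - 1) :=
            add_le_add (hMproj t htJ) (hdg t htJ)
        _ = Real.exp (κ * T) * Mproj := by ring
    · intro t htJ
      have h1 : HasDerivWithinAt (fun r => P (u r)) (P (-u t + W (F (u t)) + ξ t))
          (Set.Icc t₀ (t₀ + T)) t :=
        P.hasFDerivAt.comp_hasDerivWithinAt t (hu t htJ)
      have h2 := h1.sub (hund t htJ)
      have h3 : P (-u t + W (F (u t)) + ξ t) - un' t
          = -(P (u t) - un t) + (P.comp W) (F (u t) - F (un t)) := by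
        rw [heq t htJ]
        simp only [map_add, map_neg, map_sub, ContinuousLinearMap.comp_apply]
        rw [hPun t htJ]
        abel
      rwa [h3] at h2
    · intro t htJ
      calc ‖(P.comp W) (F (u t) - F (un t))‖
          ≤ ‖P.comp W‖ * ‖F (u t) - F (un t)‖ := (P.comp W).le_opNorm _
        _ ≤ ‖P.comp W‖ * ((Lf : ℝ) * ‖u t - un t‖) :=
            mul_le_mul_of_nonneg_left (hFn _ _) (norm_nonneg _)
        _ = κ * ‖u t - un t‖ := by rw [hκdef]; ring
        _ ≤ κ * (Mproj + ‖P (u t) - un t‖) := by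
            apply mul_le_mul_of_nonneg_left _ hκ0
            have h1 : u t - un t = (u t - P (u t)) + (P (u t) - un t) := by abel
            rw [h1]
            exact le_trans (norm_add_le _ _) (add_le_add_left (hMproj t htJ) _)
  -- Taylor step bound
  have hTay : ∀ k : ℕ, t₀ + ((k : ℝ) + 1) * ht ≤ t₀ + T →
      ‖un (t₀ + (k : ℝ) * ht + ht) - un (t₀ + (k : ℝ) * ht) - ht • un' (t₀ + (k : ℝ) * ht)‖
        ≤ M2 * ht ^ 2 / 2 := by
    intro k hk1
    set a : ℝ := t₀ + (k : ℝ) * ht with hadef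
    have hk0 : (0 : ℝ) ≤ (k : ℝ) := Nat.cast_nonneg k
    have ha0 : t₀ ≤ a := by rw [hadef]; nlinarith
    have hbT : a + ht ≤ t₀ + T := by rw [hadef]; nlinarith
    have hsub : Set.Icc a (a + ht) ⊆ Set.Icc t₀ (t₀ + T) :=
      Set.Icc_subset_Icc ha0 hbT
    have haJ : a ∈ Set.Icc t₀ (t₀ + T) := ⟨ha0, le_trans (by linarith) hbT⟩
    have key := taylor_step_aux un un' a (a + ht) M2 (by linarith)
      (fun t htab => (hund t (hsub htab)).mono hsub) ?_
    · have : a + ht - a = ht := by ring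
      rwa [this] at key
    · intro t htab
      have h1 := (convex_Icc t₀ (t₀ + T)).norm_image_sub_le_of_norm_hasDerivWithin_le
        hund' hM2 haJ (hsub htab)
      have h2 : ‖t - a‖ = t - a := by
        rw [Real.norm_eq_abs, abs_of_nonneg]; linarith [htab.1]
      rwa [h2] at h1
  -- one-step recursion for the Euler error
  have hrec : ∀ k : ℕ, t₀ + ((k : ℝ) + 1) * ht ≤ t₀ + T →
      ‖un (t₀ + ((k : ℝ) + 1) * ht) - U (k + 1)‖
        ≤ (1 + ht * L) * ‖un (t₀ + (k : ℝ) * ht) - U k‖ + M2 * ht ^ 2 / 2 := by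
    intro k hk1
    set a : ℝ := t₀ + (k : ℝ) * ht with hadef
    have hk0 : (0 : ℝ) ≤ (k : ℝ) := Nat.cast_nonneg k
    have ha0 : t₀ ≤ a := by rw [hadef]; nlinarith
    have haT : a ≤ t₀ + T := by rw [hadef]; nlinarith
    have haJ : a ∈ Set.Icc t₀ (t₀ + T) := ⟨ha0, haT⟩
    have hb : t₀ + ((k : ℝ) + 1) * ht = a + ht := by rw [hadef]; ring
    have hD : un' a - P (-(U k) + W (F (U k)) + ξ a)
        = -(un a - U k) + (P.comp W) (F (un a) - F (U k)) := by
      rw [heq a haJ]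
      simp only [map_add, map_neg, map_sub, ContinuousLinearMap.comp_apply]
      rw [hPun a haJ, hPU k]
      abel
    have hDn : ‖un' a - P (-(U k) + W (F (U k)) + ξ a)‖ ≤ L * ‖un a - U k‖ := by
      rw [hD]
      calc ‖-(un a - U k) + (P.comp W) (F (un a) - F (U k))‖
          ≤ ‖-(un a - U k)‖ + ‖(P.comp W) (F (un a) - F (U k))‖ := norm_add_le _ _
        _ ≤ ‖un a - U k‖ + κ * ‖un a - U k‖ := by
            apply add_le_add (le_of_eq (norm_neg _))
            calc ‖(P.comp W) (F (un a) - F (U k))‖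
                ≤ ‖P.comp W‖ * ‖F (un a) - F (U k)‖ := (P.comp W).le_opNorm _
              _ ≤ ‖P.comp W‖ * ((Lf : ℝ) * ‖un a - U k‖) :=
                  mul_le_mul_of_nonneg_left (hFn _ _) (norm_nonneg _)
              _ = κ * ‖un a - U k‖ := by rw [hκdef]; ring
        _ = L * ‖un a - U k‖ := by rw [hLdef]; ring
    have hR := hTay k hk1
    have hid : un (t₀ + ((k : ℝ) + 1) * ht) - U (k + 1)
        = (un a - U k) + ht • (un' a - P (-(U k) + W (F (U k)) + ξ a))
          + (un (a + ht) - un a - ht • un' a) := by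
      rw [hUstep k, hb, smul_sub]
      abel
    rw [hid]
    calc ‖(un a - U k) + ht • (un' a - P (-(U k) + W (F (U k)) + ξ a))
          + (un (a + ht) - un a - ht • un' a)‖
        ≤ ‖un a - U k‖ + ‖ht • (un' a - P (-(U k) + W (F (U k)) + ξ a))‖
          + ‖un (a + ht) - un a - ht • un' a‖ := norm_add₃_le
      _ ≤ ‖un a - U k‖ + ht * (L * ‖un a - U k‖) + M2 * ht ^ 2 / 2 := by
          apply add_le_add (add_le_add le_rfl _) hR
          rw [norm_smul, Real.norm_eq_abs, abs_of_pos hht]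
          exact mul_le_mul_of_nonneg_left hDn (le_of_lt hht)
      _ = (1 + ht * L) * ‖un a - U k‖ + M2 * ht ^ 2 / 2 := by ring
  -- discrete induction
  have hEuler : ∀ k : ℕ, t₀ + (k : ℝ) * ht ≤ t₀ + T →
      ‖un (t₀ + (k : ℝ) * ht) - U k‖ ≤ ((1 + ht * L) ^ k - 1) / L * (M2 * ht / 2) := by
    intro k
    induction k with
    | zero =>
      intro _
      simp [hun0, hU0]
    | succ k ih =>
      intro hk1
      have hk1' : t₀ + ((k : ℝ) + 1) * ht ≤ t₀ + T := by push_cast at hk1; linarith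
      have hk0 : (0 : ℝ) ≤ (k : ℝ) := Nat.cast_nonneg k
      have hk' : t₀ + (k : ℝ) * ht ≤ t₀ + T := by nlinarith
      have e1 := hrec k hk1'
      have e2 := ih hk'
      have hcast : ((k : ℝ) + 1) = ((k + 1 : ℕ) : ℝ) := by push_cast; ring
      rw [hcast] at e1
      have hfac : (0 : ℝ) ≤ 1 + ht * L := by nlinarith
      calc ‖un (t₀ + ((k + 1 : ℕ) : ℝ) * ht) - U (k + 1)‖
          ≤ (1 + ht * L) * ‖un (t₀ + (k : ℝ) * ht) - U k‖ + M2 * ht ^ 2 / 2 := e1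
        _ ≤ (1 + ht * L) * (((1 + ht * L) ^ k - 1) / L * (M2 * ht / 2)) + M2 * ht ^ 2 / 2 :=
            add_le_add_left (mul_le_mul_of_nonneg_left e2 hfac) _
        _ = ((1 + ht * L) ^ (k + 1) - 1) / L * (M2 * ht / 2) := by
            field_simp
            ring
  -- final combination
  intro k hk
  have hk0 : (0 : ℝ) ≤ (k : ℝ) := Nat.cast_nonneg k
  have hkJ : t₀ + (k : ℝ) * ht ∈ Set.Icc t₀ (t₀ + T) := ⟨by nlinarith, hk⟩
  have e1 := hproj _ hkJ
  have e2 := hEuler k hk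
  have hkht : (k : ℝ) * ht ≤ T := by linarith
  have hpow : (1 + ht * L) ^ k ≤ Real.exp (T * L) := by
    have h1 : 1 + ht * L ≤ Real.exp (ht * L) := by
      linarith [Real.add_one_le_exp (ht * L)]
    calc (1 + ht * L) ^ k ≤ (Real.exp (ht * L)) ^ k :=
          pow_le_pow_left₀ (add_nonneg zero_le_one (mul_pos hht hL0).le) h1 k
      _ = Real.exp ((k : ℝ) * (ht * L)) := by rw [← Real.exp_nat_mul]
      _ ≤ Real.exp (T * L) := by
          apply Real.exp_le_exp.2
          calc (k : ℝ) * (ht * L) = ((k : ℝ) * ht) * L := by ring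
            _ ≤ T * L := mul_le_mul_of_nonneg_right hkht hL0.le
  have e2' : ‖un (t₀ + (k : ℝ) * ht) - U k‖
      ≤ (Real.exp (T * L) - 1) / L * (M2 * ht / 2) := by
    apply le_trans e2
    apply mul_le_mul_of_nonneg_right _ (by positivity)
    apply (div_le_div_iff_of_pos_right hL0).2
    linarith
  have hsplit : u (t₀ + (k : ℝ) * ht) - U k
      = (u (t₀ + (k : ℝ) * ht) - un (t₀ + (k : ℝ) * ht))
        + (un (t₀ + (k : ℝ) * ht) - U k) := by abel
  calc ‖u (t₀ + (k : ℝ) * ht) - U k‖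
      ≤ ‖u (t₀ + (k : ℝ) * ht) - un (t₀ + (k : ℝ) * ht)‖
        + ‖un (t₀ + (k : ℝ) * ht) - U k‖ := by rw [hsplit]; exact norm_add_le _ _
    _ ≤ Real.exp (κ * T) * Mproj + (Real.exp (T * L) - 1) / L * (M2 * ht / 2) :=
        add_le_add e1 e2'
    _ = (Real.exp (T * L) - 1) / L * (M2 * ht / 2)
        + Real.exp (T * ‖P.comp W‖ * (Lf : ℝ)) * Mproj := by
        rw [hκdef]
        ring_nf
end
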